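/- arXiv:2110.07275 — 11 statements merged into one kernel-verified Lean document; each statement's English description precedes it below -/
import Mathlib

section
/- Let m, n ≥ 1 and let a ∈ ℝ^m, b ∈ ℝ^n be probability vectors. Let (i_1,j_1),…,(i_k,j_k) be index pairs with pairwise distinct rows and pairwise distinct columns, set c_ℓ := min(a_{i_ℓ}, b_{j_ℓ}) for ℓ ∈ [k] and α := 1 − ∑_{ℓ=1}^k c_ℓ. Assume α > 0, c_1 ≤ c_2 ≤ ⋯ ≤ c_k, and a_p b_q / α ≤ c_1 for all (p,q) ∈ V. Define Π ∈ ℝ^{m×n} by Π_{i_ℓ j_ℓ} := c_ℓ for ℓ ∈ [k], and for (p,q) ∈ V, Π_{pq} := (a_p − [p = i_ℓ for some ℓ]·c_ℓ)·(b_q − [q = j_{ℓ'} for some ℓ']·c_{ℓ'}) / α (where the indicator subtracts c_ℓ exactly when the row index p equals some constrained row i_ℓ, and c_{ℓ'} exactly when the column index q equals some constrained column j_{ℓ'}). Then Π ∈ U(a,b) ∩ O, i.e., the order-constrained optimal transport problem is feasible. -/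
/-- **Feasibility of order-constrained optimal transport (Proposition 1).**
Given probability vectors `a ∈ ℝ^m`, `b ∈ ℝ^n`, index pairs `(I ℓ, J ℓ)` with pairwise
distinct rows and columns, `c ℓ = min (a (I ℓ)) (b (J ℓ))`, `α = 1 - ∑ c ℓ > 0`,
`c` nondecreasing and `a p * b q / α ≤ c 0` on the unconstrained variates `V`,
the matrix `Pl` defined by `Pl (I ℓ) (J ℓ) = c ℓ` and the product formula on `V`
belongs to `U(a,b) ∩ O`. -/
theorem order_constrained_OT_feasibility
    (m n k : ℕ) (hm : 1 ≤ m) (hn : 1 ≤ n) (hk : 0 < k)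
    (a : Fin m → ℝ) (b : Fin n → ℝ)
    (ha0 : ∀ i, 0 ≤ a i) (hb0 : ∀ j, 0 ≤ b j)
    (ha1 : ∑ i, a i = 1) (hb1 : ∑ j, b j = 1)
    (I : Fin k → Fin m) (J : Fin k → Fin n)
    (hI : Function.Injective I) (hJ : Function.Injective J)
    (c : Fin k → ℝ) (hc : ∀ ℓ, c ℓ = min (a (I ℓ)) (b (J ℓ)))
    (α : ℝ) (hα : α = 1 - ∑ ℓ, c ℓ) (hαpos : 0 < α)
    (hmono : Monotone c)
    (hV : ∀ p q, (∀ ℓ, ¬(I ℓ = p ∧ J ℓ = q)) → a p * b q / α ≤ c ⟨0, hk⟩)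
    (Pl : Matrix (Fin m) (Fin n) ℝ)
    (hPl1 : ∀ ℓ, Pl (I ℓ) (J ℓ) = c ℓ)
    (hPl2 : ∀ p q, (∀ ℓ, ¬(I ℓ = p ∧ J ℓ = q)) →
      Pl p q = (a p - ∑ ℓ, if I ℓ = p then c ℓ else 0) *
               (b q - ∑ ℓ, if J ℓ = q then c ℓ else 0) / α) :
    (∀ p q, 0 ≤ Pl p q) ∧
    (∀ p, ∑ q, Pl p q = a p) ∧
    (∀ q, ∑ p, Pl p q = b q) ∧
    (∀ ℓ ℓ' : Fin k, ℓ ≤ ℓ' → Pl (I ℓ) (J ℓ) ≤ Pl (I ℓ') (J ℓ')) ∧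
    (∀ p q, (∀ ℓ, ¬(I ℓ = p ∧ J ℓ = q)) → Pl p q ≤ Pl (I ⟨0, hk⟩) (J ⟨0, hk⟩)) := by
  classical
  set A : Fin m → ℝ := fun p => a p - ∑ ℓ, if I ℓ = p then c ℓ else 0 with hA
  set B : Fin n → ℝ := fun q => b q - ∑ ℓ, if J ℓ = q then c ℓ else 0 with hB
  have hc0 : ∀ ℓ, 0 ≤ c ℓ := fun ℓ => by
    rw [hc]; exact le_min (ha0 _) (hb0 _)
  have hsumI : ∀ ℓ₀, (∑ ℓ, if I ℓ = I ℓ₀ then c ℓ else 0) = c ℓ₀ := by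
    intro ℓ₀
    rw [Finset.sum_eq_single ℓ₀]
    · simp
    · intro ℓ _ hne; exact if_neg (fun h => hne (hI h))
    · simp
  have hsumJ : ∀ ℓ₀, (∑ ℓ, if J ℓ = J ℓ₀ then c ℓ else 0) = c ℓ₀ := by
    intro ℓ₀
    rw [Finset.sum_eq_single ℓ₀]
    · simp
    · intro ℓ _ hne; exact if_neg (fun h => hne (hJ h))
    · simp
  have hsumInot : ∀ p, (∀ ℓ, I ℓ ≠ p) → (∑ ℓ, if I ℓ = p then c ℓ else 0) = 0 :=
    fun p hp => Finset.sum_eq_zero fun ℓ _ => if_neg (hp ℓ)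
  have hsumJnot : ∀ q, (∀ ℓ, J ℓ ≠ q) → (∑ ℓ, if J ℓ = q then c ℓ else 0) = 0 :=
    fun q hq => Finset.sum_eq_zero fun ℓ _ => if_neg (hq ℓ)
  have hAI : ∀ ℓ, A (I ℓ) = a (I ℓ) - c ℓ := fun ℓ => by simp [hA, hsumI ℓ]
  have hBJ : ∀ ℓ, B (J ℓ) = b (J ℓ) - c ℓ := fun ℓ => by simp [hB, hsumJ ℓ]
  have hA0 : ∀ p, 0 ≤ A p := by
    intro p
    by_cases h : ∃ ℓ, I ℓ = p
    · obtain ⟨ℓ, rfl⟩ := h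
      rw [hAI ℓ, sub_nonneg, hc]
      exact min_le_left _ _
    · push_neg at h
      simp [hA, hsumInot p h, ha0 p]
  have hB0 : ∀ q, 0 ≤ B q := by
    intro q
    by_cases h : ∃ ℓ, J ℓ = q
    · obtain ⟨ℓ, rfl⟩ := h
      rw [hBJ ℓ, sub_nonneg, hc]
      exact min_le_right _ _
    · push_neg at h
      simp [hB, hsumJnot q h, hb0 q]
  have hAle : ∀ p, A p ≤ a p := fun p =>
    sub_le_self _ (Finset.sum_nonneg fun ℓ _ => by
      by_cases h : I ℓ = p <;> simp [h, hc0 ℓ])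
  have hBle : ∀ q, B q ≤ b q := fun q =>
    sub_le_self _ (Finset.sum_nonneg fun ℓ _ => by
      by_cases h : J ℓ = q <;> simp [h, hc0 ℓ])
  have hAsum : ∑ p, A p = α := by
    rw [hα]
    simp only [hA, Finset.sum_sub_distrib, ha1]
    congr 1
    rw [Finset.sum_comm]
    refine Finset.sum_congr rfl fun ℓ _ => ?_
    rw [Finset.sum_ite_eq Finset.univ (I ℓ) (fun _ => c ℓ)]
    simp
  have hBsum : ∑ q, B q = α := by
    rw [hα]
    simp only [hB, Finset.sum_sub_distrib, hb1]
    congr 1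
    rw [Finset.sum_comm]
    refine Finset.sum_congr rfl fun ℓ _ => ?_
    rw [Finset.sum_ite_eq Finset.univ (J ℓ) (fun _ => c ℓ)]
    simp
  have hAB : ∀ ℓ, A (I ℓ) * B (J ℓ) = 0 := by
    intro ℓ
    rw [hAI ℓ, hBJ ℓ]
    rcases min_cases (a (I ℓ)) (b (J ℓ)) with ⟨h, _⟩ | ⟨h, _⟩ <;>
      rw [hc ℓ, h] <;> ring
  refine ⟨?_, ?_, ?_, ?_, ?_⟩
  · -- nonnegativity
    intro p q
    by_cases h : ∃ ℓ, I ℓ = p ∧ J ℓ = q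
    · obtain ⟨ℓ, rfl, rfl⟩ := h
      rw [hPl1 ℓ]; exact hc0 ℓ
    · push_neg at h
      rw [hPl2 p q (fun ℓ hℓ => h ℓ hℓ.1 hℓ.2)]
      have := hA0 p; have := hB0 q
      positivity
  · -- row sums
    intro p
    by_cases h : ∃ ℓ, I ℓ = p
    · obtain ⟨ℓ₀, rfl⟩ := h
      have key : ∀ q ∈ Finset.univ.erase (J ℓ₀), Pl (I ℓ₀) q = A (I ℓ₀) * B q / α := by
        intro q hq
        have hqne := Finset.ne_of_mem_erase hq
        exact hPl2 _ q fun ℓ ⟨h1, h2⟩ => hqne (h2 ▸ congrArg J (hI h1) ▸ rfl)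
      rw [← Finset.add_sum_erase _ _ (Finset.mem_univ (J ℓ₀)), hPl1 ℓ₀,
        Finset.sum_congr rfl key]
      have herase : ∑ q ∈ Finset.univ.erase (J ℓ₀), B q = α - B (J ℓ₀) := by
        rw [Finset.sum_erase_eq_sub (Finset.mem_univ _), hBsum]
      have hsum : ∑ q ∈ Finset.univ.erase (J ℓ₀), A (I ℓ₀) * B q / α
          = A (I ℓ₀) * (α - B (J ℓ₀)) / α := by
        rw [← herase, Finset.mul_sum, Finset.sum_div]
      rw [hsum]
      have h1 : A (I ℓ₀) * (α - B (J ℓ₀)) = A (I ℓ₀) * α := by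
        rw [mul_sub, hAB ℓ₀, sub_zero]
      rw [h1, mul_div_assoc, div_self hαpos.ne', mul_one]
      have := hAI ℓ₀
      linarith
    · push_neg at h
      have key : ∀ q ∈ Finset.univ, Pl p q = A p * B q / α := by
        intro q _
        exact hPl2 p q fun ℓ ⟨h1, _⟩ => h ℓ h1
      rw [Finset.sum_congr rfl key]
      have : ∑ q, A p * B q / α = A p * (∑ q, B q) / α := by
        rw [Finset.mul_sum, Finset.sum_div]
      rw [this, hBsum, mul_div_assoc, div_self hαpos.ne', mul_one]
      simp [hA, hsumInot p h]
  · -- column sums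
    intro q
    by_cases h : ∃ ℓ, J ℓ = q
    · obtain ⟨ℓ₀, rfl⟩ := h
      have key : ∀ p ∈ Finset.univ.erase (I ℓ₀), Pl p (J ℓ₀) = A p * B (J ℓ₀) / α := by
        intro p hp
        have hpne := Finset.ne_of_mem_erase hp
        exact hPl2 p _ fun ℓ ⟨h1, h2⟩ => hpne (h1 ▸ congrArg I (hJ h2) ▸ rfl)
      rw [← Finset.add_sum_erase _ _ (Finset.mem_univ (I ℓ₀)), hPl1 ℓ₀,
        Finset.sum_congr rfl key]
      have herase : ∑ p ∈ Finset.univ.erase (I ℓ₀), A p = α - A (I ℓ₀) := by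
        rw [Finset.sum_erase_eq_sub (Finset.mem_univ _), hAsum]
      have hsum : ∑ p ∈ Finset.univ.erase (I ℓ₀), A p * B (J ℓ₀) / α
          = (α - A (I ℓ₀)) * B (J ℓ₀) / α := by
        rw [← herase, ← Finset.sum_div, ← Finset.sum_mul]
      rw [hsum]
      have h1 : (α - A (I ℓ₀)) * B (J ℓ₀) = α * B (J ℓ₀) := by
        rw [sub_mul, hAB ℓ₀, sub_zero]
      rw [h1, mul_comm α, mul_div_assoc, div_self hαpos.ne', mul_one]
      have := hBJ ℓ₀
      linarith
    · push_neg at h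
      have key : ∀ p ∈ Finset.univ, Pl p q = A p * B q / α := by
        intro p _
        exact hPl2 p q fun ℓ ⟨_, h2⟩ => h ℓ h2
      rw [Finset.sum_congr rfl key]
      have : ∑ p, A p * B q / α = (∑ p, A p) * B q / α := by
        rw [Finset.sum_mul, Finset.sum_div]
      rw [this, hAsum, mul_comm α, mul_div_assoc, div_self hαpos.ne', mul_one]
      simp [hB, hsumJnot q h]
  · -- monotonicity
    intro ℓ ℓ' hle
    rw [hPl1 ℓ, hPl1 ℓ']
    exact hmono hle
  · -- V entries bounded by c 0
    intro p q hpq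
    rw [hPl2 p q hpq, hPl1]
    refine le_trans ?_ (hV p q hpq)
    have : A p * B q ≤ a p * b q := mul_le_mul (hAle p) (hBle q) (hB0 q) (ha0 p)
    gcongr (?_)/α
end

section
/- Let m, n ≥ 1, let a ∈ ℝ^m and b ∈ ℝ^n satisfy ∑_{i=1}^m a_i = ∑_{j=1}^n b_j, and let C₁(a,b) := {X ∈ ℝ^{m×n} : X 1_n = a, X^T 1_m = b}. Define P_m := (1/m) 1_m 1_m^T, P_n := (1/n) 1_n 1_n^T, M := I_m − (1/(m+n)) 1_m 1_m^T, and N := I_n − (1/(m+n)) 1_n 1_n^T. Given any X ∈ ℝ^{m×n}, define Y₁ ∈ ℝ^{m×n} by (Y₁)_{pq} := (M a)_p / n + (N b)_q / m, define Y₂ := M (X P_n) + (P_m X) N, and set X̂ := Y₁ + (X − Y₂). Then X̂ is the Euclidean projection of X onto C₁(a,b): X̂ ∈ C₁(a,b), and for every Y ∈ C₁(a,b), ‖X̂ − X‖_F ≤ ‖Y − X‖_F, where ‖·‖_F is the Frobenius norm. -/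
/-- **Euclidean projection onto the marginal-constraint affine set (Proposition 2).**
With `M = I_m - (1/(m+n)) 1 1ᵀ`, `N = I_n - (1/(m+n)) 1 1ᵀ`, `P_m = (1/m) 1 1ᵀ`,
`P_n = (1/n) 1 1ᵀ`, `Y₁` given entrywise by `(M a)_p / n + (N b)_q / m`,
`Y₂ = M (X P_n) + (P_m X) N`, the matrix `X̂ = Y₁ + (X - Y₂)` is the Euclidean
projection of `X` onto `C₁(a,b) = {X : X 1 = a, Xᵀ 1 = b}` (Frobenius norm). -/
theorem projection_rowcolsum
    (m n : ℕ) (hm : 1 ≤ m) (hn : 1 ≤ n)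
    (a : Fin m → ℝ) (b : Fin n → ℝ)
    (hab : ∑ i, a i = ∑ j, b j)
    (X : Matrix (Fin m) (Fin n) ℝ)
    (M : Matrix (Fin m) (Fin m) ℝ)
    (hM : M = 1 - ((m : ℝ) + (n : ℝ))⁻¹ • Matrix.of (fun _ _ => (1 : ℝ)))
    (N : Matrix (Fin n) (Fin n) ℝ)
    (hN : N = 1 - ((m : ℝ) + (n : ℝ))⁻¹ • Matrix.of (fun _ _ => (1 : ℝ)))
    (Pm : Matrix (Fin m) (Fin m) ℝ)
    (hPm : Pm = (m : ℝ)⁻¹ • Matrix.of (fun _ _ => (1 : ℝ)))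
    (Pn : Matrix (Fin n) (Fin n) ℝ)
    (hPn : Pn = (n : ℝ)⁻¹ • Matrix.of (fun _ _ => (1 : ℝ)))
    (Y₁ : Matrix (Fin m) (Fin n) ℝ)
    (hY₁ : ∀ p q, Y₁ p q = (M.mulVec a) p / (n : ℝ) + (N.mulVec b) q / (m : ℝ))
    (Y₂ : Matrix (Fin m) (Fin n) ℝ)
    (hY₂ : Y₂ = M * (X * Pn) + (Pm * X) * N)
    (Xh : Matrix (Fin m) (Fin n) ℝ)
    (hXh : Xh = Y₁ + (X - Y₂)) :
    ((∀ p, ∑ q, Xh p q = a p) ∧ (∀ q, ∑ p, Xh p q = b q)) ∧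
    ∀ Y : Matrix (Fin m) (Fin n) ℝ,
      (∀ p, ∑ q, Y p q = a p) → (∀ q, ∑ p, Y p q = b q) →
      Real.sqrt (∑ p, ∑ q, (Xh p q - X p q) ^ 2) ≤
        Real.sqrt (∑ p, ∑ q, (Y p q - X p q) ^ 2) := by
  have hm0 : (0:ℝ) < (m:ℝ) := by exact_mod_cast hm
  have hn0 : (0:ℝ) < (n:ℝ) := by exact_mod_cast hn
  have hm' : (m:ℝ) ≠ 0 := hm0.ne'
  have hn' : (n:ℝ) ≠ 0 := hn0.ne'
  have hmn : (m:ℝ) + (n:ℝ) ≠ 0 := by positivity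
  set c : ℝ := ((m:ℝ) + (n:ℝ))⁻¹ with hc
  set S : ℝ := ∑ i, a i with hS
  set T : ℝ := ∑ p, ∑ q, X p q with hT
  -- scalar helpers
  set u : Fin m → ℝ := fun p => (a p - ∑ q, X p q) / n + (T - S) / ((m:ℝ) * n) with hu
  set v : Fin n → ℝ := fun q => (b q - ∑ p, X p q) / m with hv
  -- entry computations
  have hMv : ∀ p, M.mulVec a p = a p - c * S := by
    intro p
    rw [hM]
    simp [Matrix.mulVec, dotProduct, Matrix.sub_apply, Matrix.one_apply,
      sub_mul, Finset.sum_sub_distrib, ite_mul, Finset.mul_sum, hS]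
  have hNv : ∀ q, N.mulVec b q = b q - c * S := by
    intro q
    rw [hN]
    simp [Matrix.mulVec, dotProduct, Matrix.sub_apply, Matrix.one_apply,
      sub_mul, Finset.sum_sub_distrib, ite_mul, Finset.mul_sum, hS]
    rw [← Finset.mul_sum, ← Finset.mul_sum, ← hab, hS]
  have hleft : ∀ (B : Matrix (Fin m) (Fin n) ℝ) p q,
      (M * B) p q = B p q - c * ∑ k, B k q := by
    intro B p q
    rw [hM]
    simp [Matrix.mul_apply, Matrix.sub_apply, Matrix.one_apply,
      sub_mul, Finset.sum_sub_distrib, ite_mul, Finset.mul_sum]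
  have hright : ∀ (B : Matrix (Fin m) (Fin n) ℝ) p q,
      (B * N) p q = B p q - c * ∑ l, B p l := by
    intro B p q
    rw [hN]
    simp [Matrix.mul_apply, Matrix.sub_apply, Matrix.one_apply,
      mul_sub, Finset.sum_sub_distrib, mul_ite, Finset.mul_sum, mul_comm]
    rw [Finset.sum_mul]
  have hXPn : ∀ p q, (X * Pn) p q = (n:ℝ)⁻¹ * ∑ l, X p l := by
    intro p q
    rw [hPn]
    simp [Matrix.mul_apply, Finset.mul_sum, mul_comm]
    rw [Finset.sum_mul]
  have hPmX : ∀ p q, (Pm * X) p q = (m:ℝ)⁻¹ * ∑ k, X k q := by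
    intro p q
    rw [hPm]
    simp [Matrix.mul_apply, Finset.mul_sum]
  have hY₂e : ∀ p q, Y₂ p q = ((n:ℝ)⁻¹ * ∑ l, X p l - c * ((n:ℝ)⁻¹ * T))
      + ((m:ℝ)⁻¹ * ∑ k, X k q - c * ((m:ℝ)⁻¹ * T)) := by
    intro p q
    have h1 : ∑ k, (X * Pn) k q = (n:ℝ)⁻¹ * T := by
      simp_rw [hXPn]
      rw [← Finset.mul_sum, ← hT]
    have h2 : ∑ l, (Pm * X) p l = (m:ℝ)⁻¹ * T := by
      simp_rw [hPmX]
      rw [← Finset.mul_sum, Finset.sum_comm, ← hT]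
    rw [hY₂, Matrix.add_apply, hleft, hright, hXPn, hPmX, h1, h2]
  -- key entrywise identity
  have hD : ∀ p q, Xh p q - X p q = u p + v q := by
    intro p q
    rw [hXh]
    simp only [Matrix.add_apply, Matrix.sub_apply]
    rw [hY₁ p q, hY₂e p q, hMv, hNv, hu, hv, hc]
    field_simp
    ring
  have hXhe : ∀ p q, Xh p q = X p q + (u p + v q) := by
    intro p q; have := hD p q; linarith
  -- sums of u and v
  have hsum_v : ∑ q, v q = (S - T) / m := by
    rw [hv]
    simp only
    rw [← Finset.sum_div]
    congr 1
    rw [Finset.sum_sub_distrib, ← hab, Finset.sum_comm, ← hT]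
  have hsum_u : ∑ p, u p = 0 := by
    rw [hu]
    simp only
    rw [Finset.sum_add_distrib, ← Finset.sum_div, Finset.sum_sub_distrib, ← hS, ← hT,
      Finset.sum_const, Finset.card_univ, Fintype.card_fin, nsmul_eq_mul]
    field_simp
    ring
  -- feasibility
  have hrow : ∀ p, ∑ q, Xh p q = a p := by
    intro p
    simp_rw [hXhe]
    rw [Finset.sum_add_distrib, Finset.sum_add_distrib, Finset.sum_const,
      Finset.card_univ, Fintype.card_fin, nsmul_eq_mul, hsum_v, hu]
    simp only
    field_simp
    ring
  have hcol : ∀ q, ∑ p, Xh p q = b q := by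
    intro q
    simp_rw [hXhe]
    rw [Finset.sum_add_distrib, Finset.sum_add_distrib, hsum_u, Finset.sum_const,
      Finset.card_univ, Fintype.card_fin, nsmul_eq_mul, hv]
    simp only
    field_simp
    ring
  refine ⟨⟨hrow, hcol⟩, ?_⟩
  intro Y hYr hYc
  apply Real.sqrt_le_sqrt
  have hrow0 : ∀ p, ∑ q, (Y p q - Xh p q) = 0 := by
    intro p; rw [Finset.sum_sub_distrib, hYr, hrow, sub_self]
  have hcol0 : ∀ q, ∑ p, (Y p q - Xh p q) = 0 := by
    intro q; rw [Finset.sum_sub_distrib, hYc, hcol, sub_self]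
  have expand : ∀ p q, (Y p q - X p q) ^ 2 =
      (Y p q - Xh p q) ^ 2 + ((Y p q - Xh p q) * (2 * u p)
        + (Y p q - Xh p q) * (2 * v q)) + (Xh p q - X p q) ^ 2 := by
    intro p q
    have h := hD p q
    rw [show Y p q - X p q = (Y p q - Xh p q) + (Xh p q - X p q) by ring]
    rw [h]
    ring
  have cross1 : ∑ p, ∑ q, (Y p q - Xh p q) * (2 * u p) = 0 := by
    apply Finset.sum_eq_zero
    intro p _
    rw [← Finset.sum_mul, hrow0, zero_mul]
  have cross2 : ∑ p, ∑ q, (Y p q - Xh p q) * (2 * v q) = 0 := by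
    rw [Finset.sum_comm]
    apply Finset.sum_eq_zero
    intro q _
    rw [← Finset.sum_mul, hcol0, zero_mul]
  have hexp : ∑ p, ∑ q, (Y p q - X p q) ^ 2 =
      (∑ p, ∑ q, (Y p q - Xh p q) ^ 2) + (∑ p, ∑ q, (Xh p q - X p q) ^ 2) := by
    simp_rw [expand, Finset.sum_add_distrib]
    rw [cross1, cross2]
    ring
  rw [hexp]
  have hnn : 0 ≤ ∑ p, ∑ q, (Y p q - Xh p q) ^ 2 := by positivity
  linarith
end

section
/- Let m, n ≥ 1. Define the (m+n) × (mn) real matrix A, with rows indexed by [m] ⊔ [n] and columns indexed by pairs (p,q) ∈ [m]×[n], by A_{i,(p,q)} := 1 if p = i and 0 otherwise (for row indices i ∈ [m]), and A_{j,(p,q)} := 1 if q = j and 0 otherwise (for row indices j ∈ [n]). Define the (mn) × (m+n) matrix P by P_{(p,q),i} := (1/n)(δ_{pi} − 1/(m+n)) for i ∈ [m] and P_{(p,q),j} := (1/m)(δ_{qj} − 1/(m+n)) for j ∈ [n], where δ is the Kronecker delta. Then P is the Moore–Penrose pseudoinverse of A: A P A = A, P A P = P, (A P)^T = A P, and (P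 A)^T = P A. -/
open Matrix

/-- **Moore–Penrose pseudoinverse of the transport constraint matrix.**
With `A` the `(m+n) × (mn)` row/column-sum constraint matrix and `P` defined by
`P (p,q) (inl i) = (1/n)(δ_{pi} - 1/(m+n))`, `P (p,q) (inr j) = (1/m)(δ_{qj} - 1/(m+n))`,
the matrix `P` satisfies the four Moore–Penrose conditions for `A`. -/
theorem pseudoinverse_transport_constraint_matrix
    (m n : ℕ) (hm : 1 ≤ m) (hn : 1 ≤ n)
    (A : Matrix (Fin m ⊕ Fin n) (Fin m × Fin n) ℝ)
    (hA : ∀ (i : Fin m) (p : Fin m) (q : Fin n),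
      A (Sum.inl i) (p, q) = if p = i then 1 else 0)
    (hA' : ∀ (j : Fin n) (p : Fin m) (q : Fin n),
      A (Sum.inr j) (p, q) = if q = j then 1 else 0)
    (P : Matrix (Fin m × Fin n) (Fin m ⊕ Fin n) ℝ)
    (hP : ∀ (i : Fin m) (p : Fin m) (q : Fin n),
      P (p, q) (Sum.inl i) =
        (1 / (n : ℝ)) * ((if p = i then 1 else 0) - 1 / ((m : ℝ) + (n : ℝ))))
    (hP' : ∀ (j : Fin n) (p : Fin m) (q : Fin n),
      P (p, q) (Sum.inr j) =
        (1 / (m : ℝ)) * ((if q = j then 1 else 0) - 1 / ((m : ℝ) + (n : ℝ)))) :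
    A * P * A = A ∧ P * A * P = P ∧ (A * P)ᵀ = A * P ∧ (P * A)ᵀ = P * A := by
  have hm0 : (m:ℝ) ≠ 0 := by positivity
  have hn0 : (n:ℝ) ≠ 0 := by positivity
  have hmn0 : (m:ℝ) + (n:ℝ) ≠ 0 := by positivity
  have e1 : ∀ i i', (A * P) (Sum.inl i) (Sum.inl i') =
      (if i = i' then 1 else 0) - 1/((m:ℝ)+(n:ℝ)) := by
    intro i i'
    by_cases h : i = i'
    · subst h
      simp [mul_apply, Fintype.sum_prod_type, hA, hP, ite_mul, mul_sub, mul_ite,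
        Finset.sum_ite_eq', Finset.sum_sub_distrib]
      rw [Finset.sum_comm]
      simp [Finset.sum_ite_eq']
      field_simp
    · have h' : ¬ i' = i := fun hc => h hc.symm
      simp [mul_apply, Fintype.sum_prod_type, hA, hP, ite_mul, mul_sub, mul_ite,
        Finset.sum_ite_eq', Finset.sum_sub_distrib, h, h']
      rw [Finset.sum_comm]
      simp [Finset.sum_ite_eq']
      field_simp
  have e2 : ∀ i j, (A * P) (Sum.inl i) (Sum.inr j) = 1/((m:ℝ)+(n:ℝ)) := by
    intro i j
    simp [mul_apply, Fintype.sum_prod_type, hA, hP', ite_mul, mul_sub, mul_ite,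
      Finset.sum_ite_eq', Finset.sum_sub_distrib]
    try rw [Finset.sum_comm]
    try simp [Finset.sum_ite_eq']
    try field_simp
    try ring
  have e3 : ∀ j i, (A * P) (Sum.inr j) (Sum.inl i) = 1/((m:ℝ)+(n:ℝ)) := by
    intro j i
    simp [mul_apply, Fintype.sum_prod_type, hA', hP, ite_mul, mul_sub, mul_ite,
      Finset.sum_ite_eq', Finset.sum_sub_distrib]
    try field_simp
    try ring
  have e4 : ∀ j j', (A * P) (Sum.inr j) (Sum.inr j') =
      (if j = j' then 1 else 0) - 1/((m:ℝ)+(n:ℝ)) := by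
    intro j j'
    by_cases h : j = j'
    · subst h
      simp [mul_apply, Fintype.sum_prod_type, hA', hP', ite_mul, mul_sub, mul_ite,
        Finset.sum_ite_eq', Finset.sum_sub_distrib]
      field_simp
    · have h' : ¬ j' = j := fun hc => h hc.symm
      simp [mul_apply, Fintype.sum_prod_type, hA', hP', ite_mul, mul_sub, mul_ite,
        Finset.sum_ite_eq', Finset.sum_sub_distrib, h, h']
      field_simp
  have f : ∀ p q p' q', (P * A) (p, q) (p', q') =
      (1/(n:ℝ)) * ((if p = p' then 1 else 0) - 1/((m:ℝ)+(n:ℝ)))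
      + (1/(m:ℝ)) * ((if q = q' then 1 else 0) - 1/((m:ℝ)+(n:ℝ))) := by
    intro p q p' q'
    simp [mul_apply, Fintype.sum_sum_type, hA, hA', hP, hP', mul_ite, mul_one, mul_zero,
      Finset.sum_ite_eq, Finset.sum_ite_eq']
  refine ⟨?_, ?_, ?_, ?_⟩
  · ext k ⟨p, q⟩
    cases k with
    | inl i =>
      rw [mul_apply, Fintype.sum_sum_type]
      simp only [e1, e2, hA, hA', sub_mul, ite_mul, mul_ite, one_mul, zero_mul,
        Finset.sum_sub_distrib, Finset.sum_ite_eq, Finset.sum_ite_eq']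
      simp
      split_ifs <;> first | (field_simp; done) | simp_all | (field_simp; ring)
    | inr j =>
      rw [mul_apply, Fintype.sum_sum_type]
      simp only [e3, e4, hA, hA', sub_mul, ite_mul, mul_ite, one_mul, zero_mul,
        Finset.sum_sub_distrib, Finset.sum_ite_eq, Finset.sum_ite_eq']
      simp
      split_ifs <;> first | (field_simp; done) | simp_all | (field_simp; ring)
  · rw [Matrix.mul_assoc]
    ext ⟨p, q⟩ k
    cases k with
    | inl i =>
      rw [mul_apply, Fintype.sum_sum_type]
      simp only [hP, hP', e1, e2, e3, e4, mul_sub, sub_mul, mul_ite, ite_mul,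
        one_mul, mul_one, zero_mul, mul_zero, Finset.sum_sub_distrib,
        Finset.sum_ite_eq, Finset.sum_ite_eq', Finset.sum_const, Finset.card_univ,
        Fintype.card_fin, smul_eq_mul]
      simp
      split_ifs <;> field_simp <;> ring
    | inr j =>
      rw [mul_apply, Fintype.sum_sum_type]
      simp only [hP, hP', e1, e2, e3, e4, mul_sub, sub_mul, mul_ite, ite_mul,
        one_mul, mul_one, zero_mul, mul_zero, Finset.sum_sub_distrib,
        Finset.sum_ite_eq, Finset.sum_ite_eq', Finset.sum_const, Finset.card_univ,
        Fintype.card_fin, smul_eq_mul]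
      simp
      split_ifs <;> field_simp <;> ring
  · ext k l
    cases k <;> cases l <;>
      simp [transpose_apply, e1, e2, e3, e4, eq_comm]
  · ext ⟨p, q⟩ ⟨p', q'⟩
    simp [transpose_apply, f, eq_comm]
end

section
/- Let m, n ≥ 1, and let A ∈ ℝ^{(m+n)×(mn)} and P ∈ ℝ^{(mn)×(m+n)} be defined by A_{i,(p,q)} := δ_{pi} for i ∈ [m], A_{j,(p,q)} := δ_{qj} for j ∈ [n], P_{(p,q),i} := (1/n)(δ_{pi} − 1/(m+n)), and P_{(p,q),j} := (1/m)(δ_{qj} − 1/(m+n)). Let a ∈ ℝ^m and b ∈ ℝ^n satisfy ∑_{i=1}^m a_i = ∑_{j=1}^n b_j, and write (a;b) ∈ ℝ^{m+n} for their concatenation. Then for any x ∈ ℝ^{mn}, the vector y := P (a;b) + (x − A^T P^T x) satisfies A y = (a;b), and there exists w ∈ ℝ^{m+n} such that y + A^T w = x. -/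
open Matrix

/-- **KKT conditions for projection onto the marginal constraints (Lemma, via the
pseudoinverse).** With `A` the row/column-sum constraint matrix, `P` its pseudoinverse,
and `∑ a = ∑ b`, the vector `y = P (a;b) + (x - Aᵀ Pᵀ x)` satisfies `A y = (a;b)` and
`y + Aᵀ w = x` for some `w`. -/
theorem projection_KKT_solution
    (m n : ℕ) (hm : 1 ≤ m) (hn : 1 ≤ n)
    (A : Matrix (Fin m ⊕ Fin n) (Fin m × Fin n) ℝ)
    (hA : ∀ (i : Fin m) (p : Fin m) (q : Fin n),
      A (Sum.inl i) (p, q) = if p = i then 1 else 0)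
    (hA' : ∀ (j : Fin n) (p : Fin m) (q : Fin n),
      A (Sum.inr j) (p, q) = if q = j then 1 else 0)
    (P : Matrix (Fin m × Fin n) (Fin m ⊕ Fin n) ℝ)
    (hP : ∀ (i : Fin m) (p : Fin m) (q : Fin n),
      P (p, q) (Sum.inl i) =
        (1 / (n : ℝ)) * ((if p = i then 1 else 0) - 1 / ((m : ℝ) + (n : ℝ))))
    (hP' : ∀ (j : Fin n) (p : Fin m) (q : Fin n),
      P (p, q) (Sum.inr j) =
        (1 / (m : ℝ)) * ((if q = j then 1 else 0) - 1 / ((m : ℝ) + (n : ℝ))))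
    (a : Fin m → ℝ) (b : Fin n → ℝ)
    (hab : ∑ i, a i = ∑ j, b j)
    (x : Fin m × Fin n → ℝ)
    (y : Fin m × Fin n → ℝ)
    (hy : y = P.mulVec (Sum.elim a b) + (x - Aᵀ.mulVec (Pᵀ.mulVec x))) :
    A.mulVec y = Sum.elim a b ∧ ∃ w : Fin m ⊕ Fin n → ℝ, y + Aᵀ.mulVec w = x := by
  have hm0 : (m:ℝ) ≠ 0 := by
    have : (0:ℕ) < m := hm
    exact_mod_cast this.ne'
  have hn0 : (n:ℝ) ≠ 0 := by
    have : (0:ℕ) < n := hn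
    exact_mod_cast this.ne'
  have hmn0 : (m:ℝ) + (n:ℝ) ≠ 0 := by positivity
  set S : ℝ := ∑ i, a i with hS
  set R : Fin m → ℝ := fun i => ∑ q, x (i, q) with hR
  set C : Fin n → ℝ := fun j => ∑ p, x (p, j) with hC
  set T : ℝ := ∑ i, R i with hT
  have hTC : ∑ j, C j = T := by
    rw [hT]
    simp only [hR, hC]
    exact Finset.sum_comm
  -- value of Aᵀ.mulVec
  have hAT : ∀ (v : Fin m ⊕ Fin n → ℝ) (p : Fin m) (q : Fin n),
      Aᵀ.mulVec v (p, q) = v (Sum.inl p) + v (Sum.inr q) := by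
    intro v p q
    simp [Matrix.mulVec, dotProduct, Fintype.sum_sum_type, Matrix.transpose_apply,
      hA, hA', ite_mul, one_mul, zero_mul]
  -- value of A.mulVec
  have hAv1 : ∀ (v : Fin m × Fin n → ℝ) (i : Fin m),
      A.mulVec v (Sum.inl i) = ∑ q, v (i, q) := by
    intro v i
    simp only [Matrix.mulVec, dotProduct, Fintype.sum_prod_type, hA, ite_mul,
      one_mul, zero_mul]
    rw [Finset.sum_comm]
    simp
  have hAv2 : ∀ (v : Fin m × Fin n → ℝ) (j : Fin n),
      A.mulVec v (Sum.inr j) = ∑ p, v (p, j) := by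
    intro v j
    simp [Matrix.mulVec, dotProduct, Fintype.sum_prod_type, hA', ite_mul, one_mul,
      zero_mul]
  -- value of P.mulVec (Sum.elim a b)
  have hPab : ∀ (p : Fin m) (q : Fin n),
      P.mulVec (Sum.elim a b) (p, q)
        = (1/(n:ℝ)) * (a p - S / ((m:ℝ)+(n:ℝ))) + (1/(m:ℝ)) * (b q - S / ((m:ℝ)+(n:ℝ))) := by
    intro p q
    have hSb : ∑ j, b j = S := hab.symm
    simp only [Matrix.mulVec, dotProduct, Fintype.sum_sum_type, Sum.elim_inl,
      Sum.elim_inr, hP, hP', sub_mul, mul_assoc, mul_sub, Finset.sum_sub_distrib, ite_mul,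
      one_mul, zero_mul, mul_ite, mul_one, mul_zero, Finset.sum_ite_eq, Finset.mem_univ,
      if_true, ← Finset.mul_sum, hS, hSb]
    ring
  -- value of Pᵀ.mulVec x
  have hPT1 : ∀ i : Fin m,
      Pᵀ.mulVec x (Sum.inl i) = (1/(n:ℝ)) * (R i - T / ((m:ℝ)+(n:ℝ))) := by
    intro i
    have hs1 : ∑ p : Fin m, ∑ q : Fin n, (if p = i then x (p, q) else 0) = R i := by
      rw [Finset.sum_comm]
      simp only [Finset.sum_ite_eq', Finset.mem_univ, if_true]
      rfl
    have hs2 : ∑ p : Fin m, ∑ q : Fin n, x (p, q) = T := rfl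
    simp only [Matrix.mulVec, dotProduct, Matrix.transpose_apply,
      Fintype.sum_prod_type, hP, sub_mul, mul_assoc, mul_sub, Finset.sum_sub_distrib,
      ite_mul, one_mul, zero_mul, ← Finset.mul_sum]
    rw [hs1, hs2]
    ring
  have hPT2 : ∀ j : Fin n,
      Pᵀ.mulVec x (Sum.inr j) = (1/(m:ℝ)) * (C j - T / ((m:ℝ)+(n:ℝ))) := by
    intro j
    have hs1 : ∑ p : Fin m, ∑ q : Fin n, (if q = j then x (p, q) else 0) = C j := by
      simp only [Finset.sum_ite_eq', Finset.mem_univ, if_true]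
      rfl
    have hs2 : ∑ p : Fin m, ∑ q : Fin n, x (p, q) = T := rfl
    simp only [Matrix.mulVec, dotProduct, Matrix.transpose_apply,
      Fintype.sum_prod_type, hP', sub_mul, mul_assoc, mul_sub, Finset.sum_sub_distrib,
      ite_mul, one_mul, zero_mul, ← Finset.mul_sum]
    rw [hs1, hs2]
    ring
  constructor
  · funext k
    cases k with
    | inl i =>
      rw [hAv1]
      have hyiq : ∀ q : Fin n, y (i, q)
          = ((1/(n:ℝ)) * (a i - S/((m:ℝ)+(n:ℝ))) - (1/(n:ℝ)) * (R i - T/((m:ℝ)+(n:ℝ)))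
              + ((1/(m:ℝ)) * (T/((m:ℝ)+(n:ℝ))) - (1/(m:ℝ)) * (S/((m:ℝ)+(n:ℝ)))))
            + ((1/(m:ℝ)) * b q - (1/(m:ℝ)) * C q) + x (i, q) := by
        intro q
        rw [hy]
        simp only [Pi.add_apply, Pi.sub_apply, hPab, hAT, hPT1, hPT2]
        ring
      have hbS : ∑ q : Fin n, b q = S := hab.symm
      have hRx : ∑ q : Fin n, x (i, q) = R i := rfl
      simp only [hyiq, Finset.sum_add_distrib, Finset.sum_sub_distrib, Finset.sum_const,
        Finset.card_univ, Fintype.card_fin, nsmul_eq_mul, ← Finset.mul_sum, hbS, hTC,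
        hRx, Sum.elim_inl]
      field_simp
      ring
    | inr j =>
      rw [hAv2]
      have hypj : ∀ p : Fin m, y (p, j)
          = ((1/(m:ℝ)) * (b j - S/((m:ℝ)+(n:ℝ))) - (1/(m:ℝ)) * (C j - T/((m:ℝ)+(n:ℝ)))
              + ((1/(n:ℝ)) * (T/((m:ℝ)+(n:ℝ))) - (1/(n:ℝ)) * (S/((m:ℝ)+(n:ℝ)))))
            + ((1/(n:ℝ)) * a p - (1/(n:ℝ)) * R p) + x (p, j) := by
        intro p
        rw [hy]
        simp only [Pi.add_apply, Pi.sub_apply, hPab, hAT, hPT1, hPT2]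
        ring
      have haS : ∑ p : Fin m, a p = S := rfl
      have hRT : ∑ p : Fin m, R p = T := rfl
      have hCx : ∑ p : Fin m, x (p, j) = C j := rfl
      simp only [hypj, Finset.sum_add_distrib, Finset.sum_sub_distrib, Finset.sum_const,
        Finset.card_univ, Fintype.card_fin, nsmul_eq_mul, ← Finset.mul_sum, haS, hRT,
        hCx, Sum.elim_inr]
      field_simp
      ring
  · refine ⟨fun k => Pᵀ.mulVec x k
      - Sum.elim (fun i => (1/(n:ℝ)) * (a i - S/((m:ℝ)+(n:ℝ))))
          (fun j => (1/(m:ℝ)) * (b j - S/((m:ℝ)+(n:ℝ)))) k, ?_⟩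
    funext pq
    obtain ⟨p, q⟩ := pq
    rw [Pi.add_apply, hAT, hy]
    simp only [Pi.add_apply, Pi.sub_apply, hPab, hAT, Sum.elim_inl, Sum.elim_inr]
    ring
end

section
/- Let N ≥ 0 and let y_1 ≥ y_2 ≥ ⋯ ≥ y_{N+1} be real numbers. Fix r with 1 ≤ r ≤ N+1 and set v := y_r. For integers 0 ≤ s ≤ r−1 define τ(s) := (v + ∑_{ℓ=1}^{s} y_ℓ)/(s+1), and define t as follows: if the set S := {s : 1 ≤ s ≤ r−1 and τ(s) > y_s} is nonempty then t := (min S) − 1, otherwise t := r − 1. Then τ(t) ≥ y_{t+1}, and if t ≥ 1 then also τ(t) ≤ y_t (and hence τ(t) ≤ y_t ≤ y_{t-1} ≤ ⋯ ≤ y_1). -/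
/-- **Properties of the pooling threshold (Lemma 1 for ePAVA).**
For a nonincreasing sequence `y 1 ≥ ⋯ ≥ y (N+1)`, rank `r` with `v = y r`,
pooled averages `τ s = (v + ∑_{ℓ=1}^s y ℓ)/(s+1)`, and
`t = (min {s | 1 ≤ s ≤ r-1, τ s > y s}) - 1` (or `t = r - 1` if that set is empty),
one has `τ t ≥ y (t+1)` and, if `t ≥ 1`, also `τ t ≤ y t`. -/
theorem pooling_threshold_properties
    (N : ℕ) (y : ℕ → ℝ)
    (hy : ∀ ℓ ℓ', 1 ≤ ℓ → ℓ ≤ ℓ' → ℓ' ≤ N + 1 → y ℓ' ≤ y ℓ)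
    (r : ℕ) (hr1 : 1 ≤ r) (hr2 : r ≤ N + 1)
    (v : ℝ) (hv : v = y r)
    (τ : ℕ → ℝ) (hτ : ∀ s, τ s = (v + ∑ ℓ ∈ Finset.Icc 1 s, y ℓ) / (s + 1))
    (S : Set ℕ) (hS : S = {s | 1 ≤ s ∧ s ≤ r - 1 ∧ τ s > y s})
    (t : ℕ)
    (ht1 : S.Nonempty → t = sInf S - 1)
    (ht2 : ¬ S.Nonempty → t = r - 1) :
    y (t + 1) ≤ τ t ∧ (1 ≤ t → τ t ≤ y t) := by
  subst hS
  set S : Set ℕ := {s | 1 ≤ s ∧ s ≤ r - 1 ∧ τ s > y s} with hS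
  have hτ' : ∀ s : ℕ, ((s : ℝ) + 1) * τ s = v + ∑ ℓ ∈ Finset.Icc 1 s, y ℓ := by
    intro s
    rw [hτ]
    have : (s : ℝ) + 1 ≠ 0 := by positivity
    field_simp
  have hstep : ∀ s : ℕ, ((s : ℝ) + 2) * τ (s + 1) = ((s : ℝ) + 1) * τ s + y (s + 1) := by
    intro s
    have h1 := hτ' s
    have h2 := hτ' (s + 1)
    rw [Finset.sum_Icc_succ_top (by omega : 1 ≤ s + 1)] at h2
    push_cast at h2 ⊢
    linarith
  -- lower bound τ s ≥ v for s ≤ r - 1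
  have hvle : ∀ s : ℕ, s ≤ r - 1 → v ≤ τ s := by
    intro s hs
    have hsum : (s : ℝ) * v ≤ ∑ ℓ ∈ Finset.Icc 1 s, y ℓ := by
      have : ∑ ℓ ∈ Finset.Icc 1 s, v ≤ ∑ ℓ ∈ Finset.Icc 1 s, y ℓ := by
        apply Finset.sum_le_sum
        intro ℓ hℓ
        simp only [Finset.mem_Icc] at hℓ
        rw [hv]
        exact hy ℓ r hℓ.1 (by omega) hr2
      simpa [Finset.sum_const, Nat.card_Icc, mul_comm] using this
    have h := hτ' s
    have hpos : (0:ℝ) < (s : ℝ) + 1 := by positivity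
    nlinarith
  -- t ∉ S and bounds on t, giving the second part
  have hnotS : t ∉ S := by
    by_cases hne : S.Nonempty
    · have ht := ht1 hne
      intro hmem
      have h1 := Nat.sInf_le hmem
      have h2 : S.Nonempty := hne
      obtain ⟨hm1, hm2, hm3⟩ := Nat.sInf_mem hne
      omega
    · rw [Set.not_nonempty_iff_eq_empty] at hne
      simp [hne]
  have htle : t ≤ r - 1 := by
    by_cases hne : S.Nonempty
    · have ht := ht1 hne
      obtain ⟨hm1, hm2, hm3⟩ := Nat.sInf_mem hne
      omega
    · have := ht2 hne
      omega
  constructor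
  · by_cases hne : S.Nonempty
    · have ht := ht1 hne
      obtain ⟨hm1, hm2, hm3⟩ := Nat.sInf_mem hne
      have htm : t + 1 = sInf S := by omega
      have hkey := hstep t
      have hpos : (0:ℝ) < (t : ℝ) + 1 := by positivity
      rw [← htm] at hm3
      nlinarith
    · have ht := ht2 hne
      have htr : t + 1 = r := by omega
      rw [htr, ← hv]
      exact hvle t (by omega)
  · intro h1t
    rw [hS, Set.mem_setOf_eq, not_and, not_and] at hnotS
    simp only [not_lt] at hnotS
    exact hnotS h1t htle
end

section
/- Let N ≥ 0 and let y_1 ≥ y_2 ≥ ⋯ ≥ y_{N+1} be real numbers. Fix r with 1 ≤ r ≤ N+1 and set v := y_r. For integers 0 ≤ s ≤ r−1 define τ(s) := (v + ∑_{ℓ=1}^{s} y_ℓ)/(s+1), and define t as follows: if the set S := {s : 1 ≤ s ≤ r−1 and τ(s) > y_s} is nonempty then t := (min S) − 1, otherwise t := r − 1. Suppose there exists s with 1 ≤ s ≤ t such that y_ℓ ≥ 0 for all 1 ≤ ℓ ≤ s−1 and y_s < 0. If τ(t) < 0, then v < 0 and ∑_{ℓ=1}^{s−1} y_ℓ < −v.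 -/
/-- **Negative pooling threshold (Lemma 2 for ePAVA).**
In the setting of the pooling threshold lemma, if `s ≤ t` is the least-ranked index
with `y s < 0` (all earlier terms being nonnegative) and `τ t < 0`, then `v < 0`
and `∑_{ℓ=1}^{s-1} y ℓ < -v`. -/
theorem pooling_threshold_negative_case
    (N : ℕ) (y : ℕ → ℝ)
    (hy : ∀ ℓ ℓ', 1 ≤ ℓ → ℓ ≤ ℓ' → ℓ' ≤ N + 1 → y ℓ' ≤ y ℓ)
    (r : ℕ) (hr1 : 1 ≤ r) (hr2 : r ≤ N + 1)
    (v : ℝ) (hv : v = y r)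
    (τ : ℕ → ℝ) (hτ : ∀ s, τ s = (v + ∑ ℓ ∈ Finset.Icc 1 s, y ℓ) / (s + 1))
    (S : Set ℕ) (hS : S = {s | 1 ≤ s ∧ s ≤ r - 1 ∧ τ s > y s})
    (t : ℕ)
    (ht1 : S.Nonempty → t = sInf S - 1)
    (ht2 : ¬ S.Nonempty → t = r - 1)
    (s : ℕ) (hs1 : 1 ≤ s) (hs2 : s ≤ t)
    (hs3 : ∀ ℓ, 1 ≤ ℓ → ℓ ≤ s - 1 → 0 ≤ y ℓ)
    (hs4 : y s < 0)
    (hτt : τ t < 0) :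
    v < 0 ∧ ∑ ℓ ∈ Finset.Icc 1 (s - 1), y ℓ < -v := by
  subst hS
  -- t ≤ r - 1 in either case
  have htr : t ≤ r - 1 := by
    by_cases h : Set.Nonempty {s | 1 ≤ s ∧ s ≤ r - 1 ∧ τ s > y s}
    · have h1 := ht1 h
      have h2 := Nat.sInf_mem h
      rw [Set.mem_setOf_eq] at h2
      omega
    · have h2 := ht2 h
      omega
  -- no index in 1..t belongs to S, hence τ k ≤ y k there
  have hnotS : ∀ k, 1 ≤ k → k ≤ t → τ k ≤ y k := by
    intro k hk1 hk2
    by_contra h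
    push_neg at h
    have hkS : k ∈ {s | 1 ≤ s ∧ s ≤ r - 1 ∧ τ s > y s} := ⟨hk1, by omega, h⟩
    have hne : Set.Nonempty {s | 1 ≤ s ∧ s ≤ r - 1 ∧ τ s > y s} := ⟨k, hkS⟩
    have hle := Nat.sInf_le hkS
    have h1 := ht1 hne
    have h2 := Nat.sInf_mem hne
    rw [Set.mem_setOf_eq] at h2
    omega
  -- τ is nondecreasing up to t
  have step : ∀ k, k + 1 ≤ t → τ k ≤ τ (k + 1) := by
    intro k hk
    have h1 := hnotS (k + 1) (by omega) hk
    have hsum : ∑ ℓ ∈ Finset.Icc 1 (k + 1), y ℓ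
        = (∑ ℓ ∈ Finset.Icc 1 k, y ℓ) + y (k + 1) :=
      Finset.sum_Icc_succ_top (by omega) y
    rw [hτ (k + 1), hsum] at h1
    rw [hτ k, hτ (k + 1), hsum]
    set A := ∑ ℓ ∈ Finset.Icc 1 k, y ℓ with hA
    push_cast at h1 ⊢
    have hk1 : (0:ℝ) < (k : ℝ) + 1 := by positivity
    have hk2 : (0:ℝ) < (k : ℝ) + 1 + 1 := by positivity
    rw [div_le_iff₀ hk2] at h1
    rw [div_le_div_iff₀ hk1 hk2]
    nlinarith [h1]
  have mono : ∀ n, ∀ k, k + n = t → τ k ≤ τ t := by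
    intro n
    induction n with
    | zero => intro k hk; simp [show k = t by omega]
    | succ n ih =>
      intro k hk
      exact (step k (by omega)).trans (ih (k + 1) (by omega))
  -- v = τ 0
  have hv0 : τ 0 = v := by
    rw [hτ 0]; simp
  have h0 : τ 0 ≤ τ t := mono t 0 (by omega)
  have hvneg : v < 0 := by rw [← hv0]; linarith
  refine ⟨hvneg, ?_⟩
  have hs1' : τ (s - 1) ≤ τ t := mono (t - (s - 1)) (s - 1) (by omega)
  have hτs : τ (s - 1) < 0 := lt_of_le_of_lt hs1' hτt
  rw [hτ (s - 1)] at hτs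
  have hpos : (0:ℝ) < ((s - 1 : ℕ) : ℝ) + 1 := by positivity
  have hnum : v + ∑ ℓ ∈ Finset.Icc 1 (s - 1), y ℓ < 0 := by
    by_contra h
    push_neg at h
    exact absurd (div_nonneg h hpos.le) (not_le.mpr hτs)
  linarith
end

section
/- Let m, n ≥ 1, fix (i,j) ∈ [m]×[n], let V := ([m]×[n]) \ {(i,j)}, let X ∈ ℝ^{m×n}, and let η ≥ 0. Let e : {1,…,mn−1} → V be a bijection such that w_ℓ := X_{e(ℓ)} is nonincreasing in ℓ, set v := X_{ij} − η, r := 1 + #{ℓ : w_ℓ > v}, τ(s) := (v + ∑_{ℓ=1}^{s} w_ℓ)/(s+1) for 0 ≤ s ≤ r−1, and t := (min{s : 1 ≤ s ≤ r−1, τ(s) > w_s}) − 1 if such s exists, and t := r−1 otherwise. Define Y ∈ ℝ^{m×n} by Y_{ij} := max(τ(t), 0), Y_{e(ℓ)} := max(τ(t), 0) for 1 ≤ ℓ ≤ t, and Y_{e(ℓ)} := max(w_ℓ, 0) for ℓ > t. Then there exist Lagrange multipliers λ : V → ℝ and δ : V ∪ {(i,j)} → ℝ such that: λ_{pq} ≥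 0 and δ_{pq} ≥ 0 for all indices; Y_{pq} = X_{pq} − λ_{pq} + δ_{pq} for all (p,q) ∈ V; Y_{ij} = X_{ij} − η + ∑_{(p,q)∈V} λ_{pq} + δ_{ij}; Y_{pq} ≤ Y_{ij} for all (p,q) ∈ V; Y_{pq} ≥ 0 for all (p,q) ∈ V ∪ {(i,j)}; λ_{pq}(Y_{pq} − Y_{ij}) = 0 for all (p,q) ∈ V; and δ_{pq} Y_{pq} = 0 for all (p,q) ∈ V ∪ {(i,j)}. -/
private lemma max_sub_mul_max (a : ℝ) : (max a 0 - a) * max a 0 = 0 := by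
  rcases le_total 0 a with h | h
  · rw [max_eq_left h]; ring
  · rw [max_eq_right h]; ring

/-- **KKT multipliers for the single-order-constraint projection (Lemma 3 for ePAVA).**
With `V = ([m]×[n]) \ {(i,j)}`, `e` an enumeration of `V` sorting `w ℓ = X (e ℓ)`
nonincreasingly, `v = X i j - η`, `r` the rank of `v`, pooled averages `τ`, cut index
`t`, and `Y` the thresholded/clipped matrix, there exist Lagrange multipliers
`lam, del ≥ 0` satisfying stationarity, primal feasibility and complementary
slackness of the projection problem. -/
theorem ePAVA_single_constraint_KKT
    (m n : ℕ) (hm : 1 ≤ m) (hn : 1 ≤ n)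
    (i : Fin m) (j : Fin n)
    (X : Matrix (Fin m) (Fin n) ℝ)
    (η : ℝ) (hη : 0 ≤ η)
    (e : ℕ → Fin m × Fin n)
    (he1 : ∀ ℓ ∈ Finset.Icc 1 (m * n - 1), e ℓ ≠ (i, j))
    (he2 : ∀ ℓ ∈ Finset.Icc 1 (m * n - 1), ∀ ℓ' ∈ Finset.Icc 1 (m * n - 1),
      e ℓ = e ℓ' → ℓ = ℓ')
    (he3 : ∀ pq : Fin m × Fin n, pq ≠ (i, j) → ∃ ℓ ∈ Finset.Icc 1 (m * n - 1), e ℓ = pq)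
    (w : ℕ → ℝ) (hw : ∀ ℓ, w ℓ = X (e ℓ).1 (e ℓ).2)
    (hmono : ∀ ℓ ℓ', 1 ≤ ℓ → ℓ ≤ ℓ' → ℓ' ≤ m * n - 1 → w ℓ' ≤ w ℓ)
    (v : ℝ) (hv : v = X i j - η)
    (r : ℕ) (hr : r = 1 + ((Finset.Icc 1 (m * n - 1)).filter (fun ℓ => v < w ℓ)).card)
    (τ : ℕ → ℝ) (hτ : ∀ s, τ s = (v + ∑ ℓ ∈ Finset.Icc 1 s, w ℓ) / (s + 1))
    (S : Set ℕ) (hS : S = {s | 1 ≤ s ∧ s ≤ r - 1 ∧ τ s > w s})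
    (t : ℕ)
    (ht1 : S.Nonempty → t = sInf S - 1)
    (ht2 : ¬ S.Nonempty → t = r - 1)
    (Y : Matrix (Fin m) (Fin n) ℝ)
    (hYij : Y i j = max (τ t) 0)
    (hY1 : ∀ ℓ ∈ Finset.Icc 1 (m * n - 1), ℓ ≤ t → Y (e ℓ).1 (e ℓ).2 = max (τ t) 0)
    (hY2 : ∀ ℓ ∈ Finset.Icc 1 (m * n - 1), t < ℓ → Y (e ℓ).1 (e ℓ).2 = max (w ℓ) 0) :
    ∃ lam del : Fin m × Fin n → ℝ,
      (∀ pq : Fin m × Fin n, pq ≠ (i, j) → 0 ≤ lam pq) ∧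
      (∀ pq : Fin m × Fin n, 0 ≤ del pq) ∧
      (∀ p q, (p, q) ≠ (i, j) → Y p q = X p q - lam (p, q) + del (p, q)) ∧
      (Y i j = X i j - η + (∑ pq ∈ Finset.univ.erase (i, j), lam pq) + del (i, j)) ∧
      (∀ p q, (p, q) ≠ (i, j) → Y p q ≤ Y i j) ∧
      (∀ p q, 0 ≤ Y p q) ∧
      (∀ p q, (p, q) ≠ (i, j) → lam (p, q) * (Y p q - Y i j) = 0) ∧
      (∀ p q, del (p, q) * Y p q = 0) := by
  classical
  set N := m * n - 1 with hN
  set F := ((Finset.Icc 1 N).filter (fun ℓ => v < w ℓ)) with hF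
  -- basic cardinality facts
  have hr1N : r - 1 ≤ N := by
    have h1 : F.card ≤ (Finset.Icc 1 N).card := Finset.card_filter_le _ _
    have h2 : (Finset.Icc 1 N).card = N := by rw [Nat.card_Icc]; omega
    omega
  -- unpack the definition of S-membership
  have hSmem : ∀ x, x ∈ S ↔ (1 ≤ x ∧ x ≤ r - 1 ∧ τ x > w x) := by
    intro x; rw [hS]; rfl
  -- t ≤ r - 1
  have htr : t ≤ r - 1 := by
    by_cases hne : S.Nonempty
    · have hmem := (hSmem _).mp (Nat.sInf_mem hne)
      have := ht1 hne
      omega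
    · rw [ht2 hne]
  have htN : t ≤ N := le_trans htr hr1N
  -- key 1 : τ t ≤ w ℓ for 1 ≤ ℓ ≤ t
  have hkey1 : ∀ ℓ, 1 ≤ ℓ → ℓ ≤ t → τ t ≤ w ℓ := by
    intro ℓ h1 h2
    have ht0 : 1 ≤ t := le_trans h1 h2
    have htnot : t ∉ S := by
      by_cases hne : S.Nonempty
      · have hmem := (hSmem _).mp (Nat.sInf_mem hne)
        have hts := ht1 hne
        apply Nat.notMem_of_lt_sInf
        omega
      · rw [Set.not_nonempty_iff_eq_empty] at hne
        simp [hne]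
    rw [hSmem] at htnot
    simp only [not_and, not_lt] at htnot
    have hwt : τ t ≤ w t := htnot ht0 htr
    exact le_trans hwt (hmono ℓ t h1 h2 htN)
  -- key 2 : w ℓ ≤ τ t for t < ℓ ≤ N
  have hkey2 : ∀ ℓ, t < ℓ → ℓ ≤ N → w ℓ ≤ τ t := by
    intro ℓ hℓ1 hℓ2
    by_cases hne : S.Nonempty
    · -- sInf S = t + 1 ∈ S, derive w (t+1) < τ t
      obtain ⟨hs1, hs2, hs3⟩ := (hSmem _).mp (Nat.sInf_mem hne)
      have hts := ht1 hne
      have hst : sInf S = t + 1 := by omega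
      rw [hst] at hs1 hs2 hs3
      have hsum : ∑ k ∈ Finset.Icc 1 (t + 1), w k
          = (∑ k ∈ Finset.Icc 1 t, w k) + w (t + 1) :=
        Finset.sum_Icc_succ_top (by omega) w
      have ht1' := hτ t
      have ht2' := hτ (t + 1)
      rw [hsum] at ht2'
      push_cast at ht2'
      have hp1 : (0:ℝ) < (t:ℝ) + 1 := by positivity
      have hp2 : (0:ℝ) < (t:ℝ) + 1 + 1 := by positivity
      have hA : w (t+1) < τ t := by
        rw [ht2'] at hs3
        rw [gt_iff_lt, lt_div_iff₀ hp2] at hs3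
        rw [ht1', lt_div_iff₀ hp1]
        nlinarith
      have : w ℓ ≤ w (t + 1) := hmono (t+1) ℓ (by omega) (by omega) hℓ2
      linarith
    · -- S empty : t = r - 1, w ℓ ≤ v ≤ τ (r-1)
      have hts := ht2 hne
      -- w ℓ ≤ v
      have hwv : w ℓ ≤ v := by
        by_contra hcon
        push_neg at hcon
        have hsub : Finset.Icc 1 ℓ ⊆ F := by
          intro x hx
          rw [Finset.mem_Icc] at hx
          rw [hF, Finset.mem_filter, Finset.mem_Icc]
          exact ⟨⟨hx.1, le_trans hx.2 hℓ2⟩,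
            lt_of_lt_of_le hcon (hmono x ℓ hx.1 hx.2 hℓ2)⟩
        have := Finset.card_le_card hsub
        rw [Nat.card_Icc] at this
        omega
      -- all of Icc 1 (r-1) satisfies v < w
      have hall : ∀ ℓ', 1 ≤ ℓ' → ℓ' ≤ r - 1 → v < w ℓ' := by
        intro ℓ' h1 h2
        by_contra hcon
        push_neg at hcon
        have hsub : F ⊆ Finset.Icc 1 (ℓ' - 1) := by
          intro x hx
          rw [hF, Finset.mem_filter, Finset.mem_Icc] at hx
          rw [Finset.mem_Icc]
          rcases Nat.lt_or_ge x ℓ' with h | h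
          · omega
          · exfalso
            have := hmono ℓ' x h1 h hx.1.2
            linarith [hx.2]
        have := Finset.card_le_card hsub
        rw [Nat.card_Icc] at this
        omega
      -- v ≤ τ (r-1)
      have hvτ : v ≤ τ (r - 1) := by
        have hsum : ((r - 1 : ℕ) : ℝ) * v ≤ ∑ k ∈ Finset.Icc 1 (r - 1), w k := by
          calc ((r - 1 : ℕ) : ℝ) * v = ∑ _k ∈ Finset.Icc 1 (r - 1), v := by
                rw [Finset.sum_const, Nat.card_Icc, nsmul_eq_mul]
                norm_num
            _ ≤ _ := Finset.sum_le_sum (fun k hk => by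
                rw [Finset.mem_Icc] at hk
                exact le_of_lt (hall k hk.1 hk.2))
        rw [hτ (r - 1), le_div_iff₀ (by positivity)]
        nlinarith
      rw [← hts] at hvτ
      linarith
  -- the multipliers
  set lam : Fin m × Fin n → ℝ :=
    fun pq => ∑ ℓ ∈ Finset.Icc 1 t, if e ℓ = pq then w ℓ - τ t else 0 with hlam
  have hIccsub : ∀ ℓ ∈ Finset.Icc 1 t, ℓ ∈ Finset.Icc 1 N := by
    intro ℓ hℓ
    rw [Finset.mem_Icc] at hℓ ⊢
    omega
  have hlam_eval : ∀ ℓ₀ ∈ Finset.Icc 1 t, lam (e ℓ₀) = w ℓ₀ - τ t := by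
    intro ℓ₀ h₀
    show (∑ ℓ ∈ Finset.Icc 1 t, if e ℓ = e ℓ₀ then w ℓ - τ t else 0) = w ℓ₀ - τ t
    rw [Finset.sum_eq_single_of_mem ℓ₀ h₀ (fun b hb hbne => by
      have : e b ≠ e ℓ₀ := fun h =>
        hbne (he2 b (hIccsub b hb) ℓ₀ (hIccsub ℓ₀ h₀) h)
      simp [this])]
    simp
  have hlam_zero : ∀ pq, (∀ ℓ ∈ Finset.Icc 1 t, e ℓ ≠ pq) → lam pq = 0 := by
    intro pq h
    show (∑ ℓ ∈ Finset.Icc 1 t, if e ℓ = pq then w ℓ - τ t else 0) = 0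
    exact Finset.sum_eq_zero (fun ℓ hℓ => by simp [h ℓ hℓ])
  set del : Fin m × Fin n → ℝ :=
    fun pq => if pq = (i, j) then max (τ t) 0 - τ t
      else Y pq.1 pq.2 - X pq.1 pq.2 + lam pq with hdel
  refine ⟨lam, del, ?_, ?_, ?_, ?_, ?_, ?_, ?_, ?_⟩
  · -- lam ≥ 0
    intro pq _
    show (0:ℝ) ≤ ∑ ℓ ∈ Finset.Icc 1 t, if e ℓ = pq then w ℓ - τ t else 0
    apply Finset.sum_nonneg
    intro ℓ hℓ
    rw [Finset.mem_Icc] at hℓ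
    split
    · linarith [hkey1 ℓ hℓ.1 hℓ.2]
    · exact le_rfl
  · -- del ≥ 0
    intro pq
    show (0:ℝ) ≤ if pq = (i, j) then max (τ t) 0 - τ t
      else Y pq.1 pq.2 - X pq.1 pq.2 + lam pq
    by_cases h : pq = (i, j)
    · rw [if_pos h]
      have := le_max_left (τ t) (0:ℝ)
      linarith
    · simp only [h, if_false]
      obtain ⟨ℓ, hℓ, hepq⟩ := he3 pq h
      rw [Finset.mem_Icc] at hℓ
      rcases le_or_gt ℓ t with hle | hlt
      · have hY := hY1 ℓ (Finset.mem_Icc.mpr hℓ) hle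
        have hl := hlam_eval ℓ (Finset.mem_Icc.mpr ⟨hℓ.1, hle⟩)
        rw [hepq] at hY hl
        rw [hY, hl, ← hepq, ← hw ℓ]
        have := le_max_left (τ t) (0:ℝ)
        linarith
      · have hY := hY2 ℓ (Finset.mem_Icc.mpr hℓ) hlt
        have hl : lam pq = 0 := by
          apply hlam_zero
          intro ℓ' hℓ' hcon
          have : ℓ' = ℓ := he2 ℓ' (hIccsub ℓ' hℓ') ℓ (Finset.mem_Icc.mpr hℓ)
            (by rw [hcon, hepq])
          rw [Finset.mem_Icc] at hℓ'
          omega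
        rw [hepq] at hY
        rw [hY, hl, ← hepq, ← hw ℓ]
        have := le_max_left (w ℓ) (0:ℝ)
        linarith
  · -- stationarity off-diagonal
    intro p q hpq
    have : del (p, q) = Y p q - X p q + lam (p, q) := by
      rw [hdel]; simp only [hpq, if_false]
    rw [this]
    ring
  · -- stationarity at (i,j)
    have hsum : (∑ pq ∈ Finset.univ.erase (i, j), lam pq)
        = ∑ ℓ ∈ Finset.Icc 1 t, (w ℓ - τ t) := by
      rw [hlam]
      rw [Finset.sum_comm]
      apply Finset.sum_congr rfl
      intro ℓ hℓ
      rw [Finset.sum_ite_eq]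
      have : e ℓ ∈ Finset.univ.erase (i, j) :=
        Finset.mem_erase.mpr ⟨he1 ℓ (hIccsub ℓ hℓ), Finset.mem_univ _⟩
      simp [this]
    have hdij : del (i, j) = max (τ t) 0 - τ t := by
      rw [hdel]; simp
    rw [hsum, hYij, hdij]
    have hτt := hτ t
    have hcard : (Finset.Icc 1 t).card = t := by rw [Nat.card_Icc]; omega
    have hsum2 : ∑ ℓ ∈ Finset.Icc 1 t, (w ℓ - τ t)
        = (∑ ℓ ∈ Finset.Icc 1 t, w ℓ) - (t : ℝ) * τ t := by
      rw [Finset.sum_sub_distrib, Finset.sum_const, hcard, nsmul_eq_mul]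
    rw [hsum2]
    have hp : ((t:ℝ) + 1) ≠ 0 := by positivity
    rw [eq_div_iff hp] at hτt
    rw [← hv]
    linarith
  · -- primal : Y p q ≤ Y i j
    intro p q hpq
    obtain ⟨ℓ, hℓ, hepq⟩ := he3 (p, q) hpq
    have hY' : Y (e ℓ).1 (e ℓ).2 = Y p q := by rw [hepq]
    rcases le_or_gt ℓ t with hle | hlt
    · rw [← hY', hY1 ℓ hℓ hle, hYij]
    · rw [← hY', hY2 ℓ hℓ hlt, hYij]
      rw [Finset.mem_Icc] at hℓ
      exact max_le_max (hkey2 ℓ hlt hℓ.2) le_rfl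
  · -- Y ≥ 0
    intro p q
    by_cases hpq : (p, q) = (i, j)
    · have : p = i ∧ q = j := Prod.mk.injEq .. ▸ Prod.mk_inj.mp hpq
      rw [this.1, this.2, hYij]; exact le_max_right _ _
    · obtain ⟨ℓ, hℓ, hepq⟩ := he3 (p, q) hpq
      have hY' : Y (e ℓ).1 (e ℓ).2 = Y p q := by rw [hepq]
      rcases le_or_gt ℓ t with hle | hlt
      · rw [← hY', hY1 ℓ hℓ hle]; exact le_max_right _ _
      · rw [← hY', hY2 ℓ hℓ hlt]; exact le_max_right _ _
  · -- CS for lam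
    intro p q hpq
    obtain ⟨ℓ, hℓ, hepq⟩ := he3 (p, q) hpq
    have hY' : Y (e ℓ).1 (e ℓ).2 = Y p q := by rw [hepq]
    rcases le_or_gt ℓ t with hle | hlt
    · rw [← hY', hY1 ℓ hℓ hle, hYij]
      ring
    · have hl : lam (p, q) = 0 := by
        apply hlam_zero
        intro ℓ' hℓ' hcon
        have : ℓ' = ℓ := he2 ℓ' (hIccsub ℓ' hℓ') ℓ hℓ (by rw [hcon, hepq])
        rw [Finset.mem_Icc] at hℓ'
        omega
      rw [hl, zero_mul]
  · -- CS for del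
    intro p q
    by_cases hpq : (p, q) = (i, j)
    · have hij : p = i ∧ q = j := Prod.mk_inj.mp hpq
      have hdij : del (p, q) = max (τ t) 0 - τ t := by
        rw [hdel]; simp [hpq]
      rw [hdij, hij.1, hij.2, hYij]
      exact max_sub_mul_max _
    · have hdpq : del (p, q) = Y p q - X p q + lam (p, q) := by
        rw [hdel]; simp only [hpq, if_false]
      rw [hdpq]
      obtain ⟨ℓ, hℓ, hepq⟩ := he3 (p, q) hpq
      rcases le_or_gt ℓ t with hle | hlt
      · have hY := hY1 ℓ hℓ hle
        have hl := hlam_eval ℓ (by rw [Finset.mem_Icc] at hℓ ⊢; omega)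
        rw [hepq] at hY hl
        rw [hY, hl]
        have hX : X p q = w ℓ := by rw [hw ℓ, hepq]
        rw [hX]
        have heq : max (τ t) 0 - w ℓ + (w ℓ - τ t) = max (τ t) 0 - τ t := by ring
        rw [heq]
        exact max_sub_mul_max _
      · have hY := hY2 ℓ hℓ hlt
        have hl : lam (p, q) = 0 := by
          apply hlam_zero
          intro ℓ' hℓ' hcon
          have : ℓ' = ℓ := he2 ℓ' (hIccsub ℓ' hℓ') ℓ hℓ (by rw [hcon, hepq])
          rw [Finset.mem_Icc] at hℓ'
          omega
        rw [hepq] at hY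
        rw [hY, hl]
        have hX : X p q = w ℓ := by rw [hw ℓ, hepq]
        rw [hX, add_zero]
        exact max_sub_mul_max _
end

section
/- Let m, n ≥ 1, fix (i,j) ∈ [m]×[n], let V := ([m]×[n]) \ {(i,j)}, and let X ∈ ℝ^{m×n}. Let e : {1,…,mn−1} → V be a bijection such that w_ℓ := X_{e(ℓ)} is nonincreasing in ℓ, set v := X_{ij}, r := 1 + #{ℓ : w_ℓ > v}, τ(s) := (v + ∑_{ℓ=1}^{s} w_ℓ)/(s+1) for 0 ≤ s ≤ r−1, and t := (min{s : 1 ≤ s ≤ r−1, τ(s) > w_s}) − 1 if such s exists, and t := r−1 otherwise. Define X̂ ∈ ℝ^{m×n} by X̂_{ij} := max(τ(t), 0), X̂_{e(ℓ)} := max(τ(t), 0) for 1 ≤ ℓ ≤ t, and X̂_{e(ℓ)} := max(w_ℓ, 0) for ℓ > t. Then X̂ is the Euclidean projection of X onto the closed convex set C := {Y ∈ ℝ^{m×n} : Y_{pq} ≥ 0 for all (p,q), and Y_{pq} ≤ Y_{ij} for all (p,q) ∈ V}: X̂ ∈ C, and ‖X̂ − X‖_F ≤ ‖Y − X‖_F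 for every Y ∈ C. -/
lemma aux_prefix (M : ℕ) (p : ℕ → Prop) [DecidablePred p]
    (hdc : ∀ ℓ ℓ', 1 ≤ ℓ → ℓ ≤ ℓ' → ℓ' ≤ M → p ℓ' → p ℓ) :
    (Finset.Icc 1 M).filter p = Finset.Icc 1 ((Finset.Icc 1 M).filter p).card := by
  set c := ((Finset.Icc 1 M).filter p).card with hc
  have hcM : c ≤ M := by
    calc c ≤ (Finset.Icc 1 M).card := Finset.card_filter_le _ _
    _ = M := by rw [Nat.card_Icc]; omega
  apply Finset.Subset.antisymm
  · intro s hs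
    rw [Finset.mem_filter, Finset.mem_Icc] at hs
    obtain ⟨⟨h1s, hsM⟩, hps⟩ := hs
    rw [Finset.mem_Icc]
    refine ⟨h1s, ?_⟩
    have hsub : Finset.Icc 1 s ⊆ (Finset.Icc 1 M).filter p := by
      intro x hx
      rw [Finset.mem_Icc] at hx
      rw [Finset.mem_filter, Finset.mem_Icc]
      exact ⟨⟨hx.1, le_trans hx.2 hsM⟩, hdc x s hx.1 hx.2 hsM hps⟩
    have := Finset.card_le_card hsub
    rw [Nat.card_Icc] at this
    omega
  · intro s hs
    rw [Finset.mem_Icc] at hs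
    obtain ⟨h1s, hsc⟩ := hs
    rw [Finset.mem_filter, Finset.mem_Icc]
    refine ⟨⟨h1s, le_trans hsc hcM⟩, ?_⟩
    by_contra hps
    have hsub : (Finset.Icc 1 M).filter p ⊆ Finset.Icc 1 (s - 1) := by
      intro x hx
      rw [Finset.mem_filter, Finset.mem_Icc] at hx
      rw [Finset.mem_Icc]
      refine ⟨hx.1.1, ?_⟩
      by_contra hxs
      exact hps (hdc s x h1s (by omega) hx.1.2 hx.2)
    have := Finset.card_le_card hsub
    rw [Nat.card_Icc] at this
    omega

lemma aux_div_le (a b u : ℝ) (hu : 1 ≤ u) (h : (a + b) / (u + 1) ≤ b) :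
    a / u ≤ (a + b) / (u + 1) := by
  have hu0 : (0:ℝ) < u := by linarith
  have hu1 : (0:ℝ) < u + 1 := by linarith
  rw [div_le_div_iff₀ hu0 hu1]
  have h2 : a + b ≤ b * (u + 1) := by
    have := (div_le_iff₀ hu1).mp h
    linarith
  nlinarith

lemma aux_div_ge (a b u : ℝ) (hu : 1 ≤ u) (h : b ≤ (a + b) / (u + 1)) :
    (a + b) / (u + 1) ≤ a / u := by
  have hu0 : (0:ℝ) < u := by linarith
  have hu1 : (0:ℝ) < u + 1 := by linarith
  rw [div_le_div_iff₀ hu1 hu0]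
  have h2 : b * (u + 1) ≤ a + b := by
    have := (le_div_iff₀ hu1).mp h
    linarith
  nlinarith

/-- **Correctness of ePAVA for a single order constraint (Proposition 3, k = 1).**
With `V = ([m]×[n]) \ {(i,j)}`, `e` an enumeration of `V` sorting `w ℓ = X (e ℓ)`
nonincreasingly, `v = X i j`, rank `r`, pooled averages `τ`, cut index `t`, the
thresholded matrix `X̂` is the Euclidean (Frobenius) projection of `X` onto
`C = {Y : Y ≥ 0 entrywise, Y p q ≤ Y i j for (p,q) ∈ V}`. -/
theorem ePAVA_single_constraint_projection
    (m n : ℕ) (hm : 1 ≤ m) (hn : 1 ≤ n)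
    (i : Fin m) (j : Fin n)
    (X : Matrix (Fin m) (Fin n) ℝ)
    (e : ℕ → Fin m × Fin n)
    (he1 : ∀ ℓ ∈ Finset.Icc 1 (m * n - 1), e ℓ ≠ (i, j))
    (he2 : ∀ ℓ ∈ Finset.Icc 1 (m * n - 1), ∀ ℓ' ∈ Finset.Icc 1 (m * n - 1),
      e ℓ = e ℓ' → ℓ = ℓ')
    (he3 : ∀ pq : Fin m × Fin n, pq ≠ (i, j) → ∃ ℓ ∈ Finset.Icc 1 (m * n - 1), e ℓ = pq)
    (w : ℕ → ℝ) (hw : ∀ ℓ, w ℓ = X (e ℓ).1 (e ℓ).2)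
    (hmono : ∀ ℓ ℓ', 1 ≤ ℓ → ℓ ≤ ℓ' → ℓ' ≤ m * n - 1 → w ℓ' ≤ w ℓ)
    (v : ℝ) (hv : v = X i j)
    (r : ℕ) (hr : r = 1 + ((Finset.Icc 1 (m * n - 1)).filter (fun ℓ => v < w ℓ)).card)
    (τ : ℕ → ℝ) (hτ : ∀ s, τ s = (v + ∑ ℓ ∈ Finset.Icc 1 s, w ℓ) / (s + 1))
    (S : Set ℕ) (hS : S = {s | 1 ≤ s ∧ s ≤ r - 1 ∧ τ s > w s})
    (t : ℕ)
    (ht1 : S.Nonempty → t = sInf S - 1)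
    (ht2 : ¬ S.Nonempty → t = r - 1)
    (Xh : Matrix (Fin m) (Fin n) ℝ)
    (hXhij : Xh i j = max (τ t) 0)
    (hXh1 : ∀ ℓ ∈ Finset.Icc 1 (m * n - 1), ℓ ≤ t → Xh (e ℓ).1 (e ℓ).2 = max (τ t) 0)
    (hXh2 : ∀ ℓ ∈ Finset.Icc 1 (m * n - 1), t < ℓ → Xh (e ℓ).1 (e ℓ).2 = max (w ℓ) 0) :
    ((∀ p q, 0 ≤ Xh p q) ∧ (∀ p q, (p, q) ≠ (i, j) → Xh p q ≤ Xh i j)) ∧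
    ∀ Y : Matrix (Fin m) (Fin n) ℝ,
      (∀ p q, 0 ≤ Y p q) → (∀ p q, (p, q) ≠ (i, j) → Y p q ≤ Y i j) →
      Real.sqrt (∑ p, ∑ q, (Xh p q - X p q) ^ 2) ≤
        Real.sqrt (∑ p, ∑ q, (Y p q - X p q) ^ 2) := by
  set θ := max (τ t) 0 with hθdef
  have hθ0 : 0 ≤ θ := le_max_right _ _
  have hSiff : ∀ s, s ∈ S ↔ 1 ≤ s ∧ s ≤ r - 1 ∧ τ s > w s := by
    intro s; rw [hS]; exact Iff.rfl
  have hrle : r - 1 ≤ m * n - 1 := by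
    have h1 : ((Finset.Icc 1 (m * n - 1)).filter (fun ℓ => v < w ℓ)).card
        ≤ (Finset.Icc 1 (m * n - 1)).card := Finset.card_filter_le _ _
    rw [Nat.card_Icc] at h1
    omega
  have htr : t ≤ r - 1 := by
    by_cases hSne : S.Nonempty
    · have h0 := ht1 hSne
      have hmem := (hSiff _).mp (Nat.sInf_mem hSne)
      omega
    · rw [ht2 hSne]
  have htN : t ≤ m * n - 1 := le_trans htr hrle
  have hτle : ∀ u, 1 ≤ u → u ≤ t → τ u ≤ w u := by
    intro u h1 h2
    have hnot : u ∉ S := by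
      by_cases hSne : S.Nonempty
      · have h0 := ht1 hSne
        have hmem := (hSiff _).mp (Nat.sInf_mem hSne)
        intro hu
        have := Nat.sInf_le hu
        omega
      · intro hu; exact hSne ⟨u, hu⟩
    by_contra hlt
    push_neg at hlt
    exact hnot ((hSiff u).mpr ⟨h1, le_trans h2 htr, hlt⟩)
  have hsum : ∀ u : ℕ, ∑ ℓ ∈ Finset.Icc 1 (u + 1), w ℓ
      = (∑ ℓ ∈ Finset.Icc 1 u, w ℓ) + w (u + 1) :=
    fun u => Finset.sum_Icc_succ_top (by omega) w
  have hτu : ∀ u : ℕ, τ u = (v + ∑ ℓ ∈ Finset.Icc 1 u, w ℓ) / ((u : ℝ) + 1) := by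
    intro u; rw [hτ u]
  have hτsucc : ∀ u : ℕ, τ (u + 1)
      = ((v + ∑ ℓ ∈ Finset.Icc 1 u, w ℓ) + w (u + 1)) / (((u : ℝ) + 1) + 1) := by
    intro u
    rw [hτ (u + 1), hsum u]
    push_cast
    ring_nf
  have hτ0 : τ 0 = v := by rw [hτ]; simp
  have hstep : ∀ u, u + 1 ≤ t → τ u ≤ τ (u + 1) := by
    intro u hu
    have hle : τ (u + 1) ≤ w (u + 1) := hτle (u + 1) (by omega) hu
    rw [hτsucc u] at hle ⊢
    rw [hτu u]
    have hcast : (0:ℝ) ≤ (u:ℝ) := Nat.cast_nonneg u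
    exact aux_div_le _ _ _ (by linarith) hle
  have hmonot : ∀ b, b ≤ t → ∀ a, a ≤ b → τ a ≤ τ b := by
    intro b
    induction b with
    | zero =>
      intro _ a ha
      have : a = 0 := Nat.le_zero.mp ha
      rw [this]
    | succ b ih =>
      intro hb a ha
      by_cases hab : a = b + 1
      · rw [hab]
      · have ha' : a ≤ b := by omega
        exact le_trans (ih (by omega) a ha') (hstep b hb)
  have hθτ : ∀ s, s ≤ t → τ s ≤ θ :=
    fun s hs => le_trans (hmonot t le_rfl s hs) (le_max_left _ _)
  -- w ℓ ≤ θ for ℓ > t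
  have hwθ : ∀ ℓ ∈ Finset.Icc 1 (m * n - 1), t < ℓ → w ℓ ≤ θ := by
    intro ℓ hℓ htℓ
    rw [Finset.mem_Icc] at hℓ
    by_cases hcase : r - 1 < ℓ
    · have hpre : (Finset.Icc 1 (m * n - 1)).filter (fun ℓ => v < w ℓ)
          = Finset.Icc 1 (r - 1) := by
        have h0 := aux_prefix (m * n - 1) (fun ℓ => v < w ℓ)
          (fun a b h1 h2 h3 hb => lt_of_lt_of_le hb (hmono a b h1 h2 h3))
        rw [h0]
        congr 1
        omega
      have hnot : ℓ ∉ (Finset.Icc 1 (m * n - 1)).filter (fun ℓ => v < w ℓ) := by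
        rw [hpre, Finset.mem_Icc]; omega
      have hwv : w ℓ ≤ v := by
        by_contra h
        push_neg at h
        exact hnot (Finset.mem_filter.mpr ⟨Finset.mem_Icc.mpr hℓ, h⟩)
      calc w ℓ ≤ v := hwv
        _ = τ 0 := hτ0.symm
        _ ≤ θ := hθτ 0 (Nat.zero_le t)
    · have hSne : S.Nonempty := by
        by_contra hS'
        have := ht2 hS'
        omega
      have ht' := ht1 hSne
      have hmemS := (hSiff _).mp (Nat.sInf_mem hSne)
      have ht1' : t + 1 = sInf S := by omega
      have hgt : w (t + 1) < τ (t + 1) := by rw [ht1']; exact hmemS.2.2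
      have hdec : τ (t + 1) ≤ τ t := by
        have hgt' : w (t + 1) ≤ τ (t + 1) := le_of_lt hgt
        rw [hτsucc t] at hgt' ⊢
        rw [hτu t]
        have hcast : (0:ℝ) ≤ (t:ℝ) := Nat.cast_nonneg t
        exact aux_div_ge _ _ _ (by linarith) hgt'
      calc w ℓ ≤ w (t + 1) := hmono (t + 1) ℓ (by omega) (by omega) hℓ.2
        _ ≤ τ (t + 1) := le_of_lt hgt
        _ ≤ τ t := hdec
        _ ≤ θ := le_max_left _ _
  constructor
  · constructor
    · intro p q
      by_cases hpq : (p, q) = (i, j)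
      · rw [Prod.ext_iff] at hpq
        obtain ⟨h1, h2⟩ := hpq
        simp only at h1 h2
        rw [h1, h2, hXhij]
        exact hθ0
      · obtain ⟨ℓ, hℓ, hel⟩ := he3 (p, q) hpq
        have h1 : (e ℓ).1 = p := by rw [hel]
        have h2 : (e ℓ).2 = q := by rw [hel]
        rw [← h1, ← h2]
        rcases le_or_gt ℓ t with h | h
        · rw [hXh1 ℓ hℓ h]; exact hθ0
        · rw [hXh2 ℓ hℓ h]; exact le_max_right _ _
    · intro p q hpq
      obtain ⟨ℓ, hℓ, hel⟩ := he3 (p, q) hpq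
      have h1 : (e ℓ).1 = p := by rw [hel]
      have h2 : (e ℓ).2 = q := by rw [hel]
      rw [← h1, ← h2, hXhij]
      rcases le_or_gt ℓ t with h | h
      · rw [hXh1 ℓ hℓ h]
      · rw [hXh2 ℓ hℓ h]
        exact max_le (hwθ ℓ hℓ h) hθ0
  · intro Y hY0 hY1
    have key : 0 ≤ ∑ pq : Fin m × Fin n,
        (Xh pq.1 pq.2 - X pq.1 pq.2) * (Y pq.1 pq.2 - Xh pq.1 pq.2) := by
      set F : Fin m × Fin n → ℝ := fun pq =>
        (Xh pq.1 pq.2 - X pq.1 pq.2) * (Y pq.1 pq.2 - Xh pq.1 pq.2) with hF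
      have hsplit : ∑ pq : Fin m × Fin n, F pq
          = (∑ pq ∈ Finset.univ.erase (i, j), F pq) + F (i, j) :=
        (Finset.sum_erase_add _ _ (Finset.mem_univ _)).symm
      have hbij : ∑ pq ∈ Finset.univ.erase (i, j), F pq
          = ∑ ℓ ∈ Finset.Icc 1 (m * n - 1), F (e ℓ) := by
        refine (Finset.sum_bij (fun ℓ _ => e ℓ) ?_ ?_ ?_ ?_).symm
        · intro ℓ hℓ
          exact Finset.mem_erase.mpr ⟨he1 ℓ hℓ, Finset.mem_univ _⟩
        · intro a ha b hb hab
          exact he2 a ha b hb hab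
        · intro pq hpq
          obtain ⟨ℓ, hℓ, hel⟩ := he3 pq (Finset.mem_erase.mp hpq).1
          exact ⟨ℓ, hℓ, hel⟩
        · intro ℓ hℓ
          rfl
      have hIoc : ∀ M : ℕ, Finset.Icc 1 M = Finset.Ioc 0 M :=
        fun M => Finset.Icc_add_one_left_eq_Ioc 0 M
      have hsplit2 : (∑ ℓ ∈ Finset.Ioc 0 t, F (e ℓ))
          + ∑ ℓ ∈ Finset.Ioc t (m * n - 1), F (e ℓ)
          = ∑ ℓ ∈ Finset.Icc 1 (m * n - 1), F (e ℓ) := by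
        rw [hIoc]
        exact Finset.sum_Ioc_consecutive _ (Nat.zero_le t) htN
      have htail : 0 ≤ ∑ ℓ ∈ Finset.Ioc t (m * n - 1), F (e ℓ) := by
        apply Finset.sum_nonneg
        intro ℓ hℓ
        rw [Finset.mem_Ioc] at hℓ
        have hI : ℓ ∈ Finset.Icc 1 (m * n - 1) := Finset.mem_Icc.mpr ⟨by omega, hℓ.2⟩
        have hFℓ : F (e ℓ)
            = (max (w ℓ) 0 - w ℓ) * (Y (e ℓ).1 (e ℓ).2 - max (w ℓ) 0) := by
          rw [hF]
          simp only
          rw [hXh2 ℓ hI hℓ.1, ← hw ℓ]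
        rw [hFℓ]
        rcases le_or_gt 0 (w ℓ) with h | h
        · rw [max_eq_left h]
          simp
        · rw [max_eq_right h.le]
          have hy := hY0 (e ℓ).1 (e ℓ).2
          nlinarith
      have hcardt : (Finset.Icc 1 t).card = t := by simp
      have hheadterm : ∀ ℓ ∈ Finset.Icc 1 t,
          min (θ - w ℓ) 0 * Y i j - (θ - w ℓ) * θ ≤ F (e ℓ) := by
        intro ℓ hℓ
        rw [Finset.mem_Icc] at hℓ
        have hI : ℓ ∈ Finset.Icc 1 (m * n - 1) :=
          Finset.mem_Icc.mpr ⟨hℓ.1, le_trans hℓ.2 htN⟩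
        have hFℓ : F (e ℓ) = (θ - w ℓ) * (Y (e ℓ).1 (e ℓ).2 - θ) := by
          rw [hF]
          simp only
          rw [hXh1 ℓ hI hℓ.2, ← hw ℓ]
        rw [hFℓ]
        have hy0 := hY0 (e ℓ).1 (e ℓ).2
        have hne : ((e ℓ).1, (e ℓ).2) ≠ (i, j) := by simpa using he1 ℓ hI
        have hyle : Y (e ℓ).1 (e ℓ).2 ≤ Y i j := hY1 (e ℓ).1 (e ℓ).2 hne
        rcases le_or_gt 0 (θ - w ℓ) with h | h
        · rw [min_eq_right h]
          nlinarith
        · rw [min_eq_left h.le]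
          nlinarith
      have hheadsum : ∑ ℓ ∈ Finset.Icc 1 t, (min (θ - w ℓ) 0 * Y i j - (θ - w ℓ) * θ)
          ≤ ∑ ℓ ∈ Finset.Icc 1 t, F (e ℓ) := Finset.sum_le_sum hheadterm
      have hDτ : (θ - v) + ∑ ℓ ∈ Finset.Icc 1 t, (θ - w ℓ)
          = ((t : ℝ) + 1) * (θ - τ t) := by
        have h1 : v + ∑ ℓ ∈ Finset.Icc 1 t, w ℓ = ((t : ℝ) + 1) * τ t := by
          rw [hτu t]
          field_simp
        rw [Finset.sum_sub_distrib, Finset.sum_const, hcardt, nsmul_eq_mul]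
        linear_combination -h1
      have hθD : θ * (((t : ℝ) + 1) * (θ - τ t)) = 0 := by
        rcases le_or_gt 0 (τ t) with h | h
        · rw [hθdef, max_eq_left h]
          ring
        · rw [hθdef, max_eq_right h.le]
          ring
      have hE : 0 ≤ (θ - v) + ∑ ℓ ∈ Finset.Icc 1 t, min (θ - w ℓ) 0 := by
        obtain ⟨u, hu⟩ : ∃ u, ((Finset.Icc 1 t).filter (fun s => θ < w s)).card = u :=
          ⟨_, rfl⟩
        have hut : u ≤ t := by
          have h0 := Finset.card_filter_le (Finset.Icc 1 t) (fun s => θ < w s)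
          rw [Nat.card_Icc, hu] at h0
          omega
        have hpre : (Finset.Icc 1 t).filter (fun s => θ < w s) = Finset.Icc 1 u := by
          have h0 := aux_prefix t (fun s => θ < w s)
            (fun a b h1 h2 h3 hb => lt_of_lt_of_le hb (hmono a b h1 h2 (le_trans h3 htN)))
          rw [hu] at h0
          exact h0
        have hminsum : ∑ ℓ ∈ Finset.Icc 1 t, min (θ - w ℓ) 0
            = ∑ ℓ ∈ Finset.Icc 1 u, (θ - w ℓ) := by
          rw [← hpre, Finset.sum_filter]
          refine Finset.sum_congr rfl fun x hx => ?_
          rcases lt_or_ge θ (w x) with h | h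
          · rw [if_pos h, min_eq_left (by linarith)]
          · rw [if_neg (not_lt.mpr h), min_eq_right (by linarith)]
        rw [hminsum]
        have hcardu : (Finset.Icc 1 u).card = u := by rw [Nat.card_Icc]; omega
        have h1 : v + ∑ ℓ ∈ Finset.Icc 1 u, w ℓ = ((u : ℝ) + 1) * τ u := by
          rw [hτu u]
          field_simp
        have h2 : τ u ≤ θ := hθτ u hut
        have h3 : (θ - v) + ∑ ℓ ∈ Finset.Icc 1 u, (θ - w ℓ)
            = ((u : ℝ) + 1) * (θ - τ u) := by
          rw [Finset.sum_sub_distrib, Finset.sum_const, hcardu, nsmul_eq_mul]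
          linear_combination -h1
        rw [h3]
        have h4 : (0 : ℝ) ≤ (u : ℝ) := Nat.cast_nonneg u
        nlinarith
      have hminsplit : ∑ ℓ ∈ Finset.Icc 1 t, (min (θ - w ℓ) 0 * Y i j - (θ - w ℓ) * θ)
          = (∑ ℓ ∈ Finset.Icc 1 t, min (θ - w ℓ) 0) * Y i j
            - (∑ ℓ ∈ Finset.Icc 1 t, (θ - w ℓ)) * θ := by
        rw [Finset.sum_sub_distrib, Finset.sum_mul, Finset.sum_mul]
      have hFij : F (i, j) = (θ - v) * (Y i j - θ) := by
        rw [hF]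
        simp only
        rw [hXhij, ← hv]
      have hyij : 0 ≤ Y i j := hY0 i j
      have hhead : 0 ≤ F (i, j) + ∑ ℓ ∈ Finset.Ioc 0 t, F (e ℓ) := by
        rw [← hIoc t]
        have hb := hheadsum
        rw [hminsplit] at hb
        have hmul : 0 ≤ Y i j * ((θ - v) + ∑ ℓ ∈ Finset.Icc 1 t, min (θ - w ℓ) 0) :=
          mul_nonneg hyij hE
        have hzero : θ * ((θ - v) + ∑ ℓ ∈ Finset.Icc 1 t, (θ - w ℓ)) = 0 := by
          rw [hDτ]
          exact hθD
        have hid : (θ - v) * (Y i j - θ)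
            + ((∑ ℓ ∈ Finset.Icc 1 t, min (θ - w ℓ) 0) * Y i j
              - (∑ ℓ ∈ Finset.Icc 1 t, (θ - w ℓ)) * θ)
            = Y i j * ((θ - v) + ∑ ℓ ∈ Finset.Icc 1 t, min (θ - w ℓ) 0)
              - θ * ((θ - v) + ∑ ℓ ∈ Finset.Icc 1 t, (θ - w ℓ)) := by
          ring
        rw [hFij]
        linarith
      rw [hsplit, hbij, ← hsplit2]
      linarith
    have key2 : 0 ≤ ∑ p, ∑ q, (Xh p q - X p q) * (Y p q - Xh p q) := by
      exact le_of_le_of_eq key (Fintype.sum_prod_type _)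
    have hB : 0 ≤ ∑ p, ∑ q, (Y p q - Xh p q) ^ 2 :=
      Finset.sum_nonneg fun p _ => Finset.sum_nonneg fun q _ => sq_nonneg _
    have h1 : ∑ p, ∑ q, (Y p q - X p q) ^ 2
        = (∑ p, ∑ q, (Xh p q - X p q) ^ 2) + ((∑ p, ∑ q, (Y p q - Xh p q) ^ 2)
          + 2 * ∑ p, ∑ q, (Xh p q - X p q) * (Y p q - Xh p q)) := by
      rw [Finset.mul_sum, ← Finset.sum_add_distrib, ← Finset.sum_add_distrib]
      refine Finset.sum_congr rfl fun p _ => ?_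
      rw [Finset.mul_sum, ← Finset.sum_add_distrib, ← Finset.sum_add_distrib]
      refine Finset.sum_congr rfl fun q _ => by ring
    apply Real.sqrt_le_sqrt
    linarith
end

section
/- Let N ≥ 0, let w_1 ≥ w_2 ≥ ⋯ ≥ w_N be real numbers, and let v₀ ∈ ℝ. For each η ≥ 0, set v(η) := v₀ − η, r(η) := 1 + #{ℓ : w_ℓ > v(η)}, τ(s, η) := (v(η) + ∑_{ℓ=1}^{s} w_ℓ)/(s+1) for 0 ≤ s ≤ r(η)−1, and t(η) := (min{s : 1 ≤ s ≤ r(η)−1, τ(s,η) > w_s}) − 1 if such s exists, and t(η) := r(η)−1 otherwise. Define T : [0,∞) → ℝ by T(η) := max(τ(t(η), η), 0). Then T is monotone nonincreasing on [0,∞) and convex on [0,∞). -/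
/-- **The clipped pooling threshold function is nonincreasing and convex
(Lemma on `T(η)` for ePAVA).** For a nonincreasing sequence `w 1 ≥ ⋯ ≥ w N`
and distinguished value `v₀`, the function `T η = max (τ (t η) η) 0`, obtained by
pooling `v₀ - η` with the top `t η` values, is antitone and convex on `[0, ∞)`. -/
theorem pooling_threshold_function_antitone_convex
    (N : ℕ) (w : ℕ → ℝ)
    (hw : ∀ ℓ ℓ', 1 ≤ ℓ → ℓ ≤ ℓ' → ℓ' ≤ N → w ℓ' ≤ w ℓ)
    (v₀ : ℝ)
    (v : ℝ → ℝ) (hv : ∀ η, v η = v₀ - η)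
    (r : ℝ → ℕ)
    (hr : ∀ η, r η = 1 + ((Finset.Icc 1 N).filter (fun ℓ => v η < w ℓ)).card)
    (τ : ℕ → ℝ → ℝ)
    (hτ : ∀ s η, τ s η = (v η + ∑ ℓ ∈ Finset.Icc 1 s, w ℓ) / (s + 1))
    (S : ℝ → Set ℕ)
    (hS : ∀ η, S η = {s | 1 ≤ s ∧ s ≤ r η - 1 ∧ τ s η > w s})
    (t : ℝ → ℕ)
    (ht1 : ∀ η, (S η).Nonempty → t η = sInf (S η) - 1)
    (ht2 : ∀ η, ¬ (S η).Nonempty → t η = r η - 1)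
    (T : ℝ → ℝ) (hT : ∀ η, T η = max (τ (t η) η) 0) :
    AntitoneOn T (Set.Ici 0) ∧ ConvexOn ℝ (Set.Ici 0) T := by
  -- the fundamental recurrence for τ
  have key : ∀ (s : ℕ) (η : ℝ),
      ((s : ℝ) + 2) * τ (s + 1) η = ((s : ℝ) + 1) * τ s η + w (s + 1) := by
    intro s η
    rw [hτ, hτ, Finset.sum_Icc_succ_top (by omega : 1 ≤ s + 1)]
    have h1 : ((s : ℝ) + 1) ≠ 0 := by positivity
    have h2 : ((s : ℝ) + 1 + 1) ≠ 0 := by positivity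
    push_cast
    field_simp
    ring
  have spos : ∀ s : ℕ, (0 : ℝ) < (s : ℝ) + 1 := by
    intro s; positivity
  have step_dec : ∀ (s : ℕ) (η : ℝ), w (s + 1) ≤ τ s η → τ (s + 1) η ≤ τ s η := by
    intro s η h
    have hk := key s η
    nlinarith [spos s]
  have step_w : ∀ (s : ℕ) (η : ℝ), w (s + 1) ≤ τ s η → w (s + 1) ≤ τ (s + 1) η := by
    intro s η h
    have hk := key s η
    nlinarith [spos s]
  have step_inc : ∀ (s : ℕ) (η : ℝ), τ (s + 1) η ≤ w (s + 1) → τ s η ≤ τ (s + 1) η := by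
    intro s η h
    have hk := key s η
    nlinarith [spos s]
  have step_rev : ∀ (s : ℕ) (η : ℝ), w (s + 1) < τ (s + 1) η → w (s + 1) < τ s η := by
    intro s η h
    have hk := key s η
    nlinarith [spos s]
  -- r η ≤ N + 1
  have hrN : ∀ η, r η ≤ N + 1 := by
    intro η
    have h := Finset.card_filter_le (Finset.Icc 1 N) (fun ℓ => v η < w ℓ)
    rw [hr]
    simp [Nat.card_Icc] at h ⊢
    omega
  have hr1 : ∀ η, 1 ≤ r η := by
    intro η; rw [hr]; omega
  -- t η ≤ r η - 1 and t η ≤ N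
  have hSmem : ∀ η s, s ∈ S η → 1 ≤ s ∧ s ≤ r η - 1 ∧ w s < τ s η := by
    intro η s hs
    rw [hS] at hs
    exact hs
  have htr : ∀ η, t η ≤ r η - 1 := by
    intro η
    by_cases hne : (S η).Nonempty
    · rw [ht1 η hne]
      have := hSmem η _ (Nat.sInf_mem hne)
      omega
    · rw [ht2 η hne]
  have htN : ∀ η, t η ≤ N := by
    intro η
    have := htr η
    have := hrN η
    omega
  -- monotone increase up to t η
  have notMem_le : ∀ (η : ℝ) (s : ℕ), 1 ≤ s → s ≤ t η → τ s η ≤ w s := by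
    intro η s h1 h2
    have hsr : s ≤ r η - 1 := le_trans h2 (htr η)
    have hnot : s ∉ S η := by
      by_cases hne : (S η).Nonempty
      · rw [ht1 η hne] at h2
        have hmem := hSmem η _ (Nat.sInf_mem hne)
        have : s < sInf (S η) := by omega
        exact Nat.notMem_of_lt_sInf this
      · intro hmem; exact hne ⟨s, hmem⟩
    rw [hS] at hnot
    simp only [Set.mem_setOf_eq, not_and, not_lt] at hnot
    exact hnot h1 hsr
  have mono_before : ∀ (η : ℝ) (s : ℕ), s ≤ t η → τ s η ≤ τ (t η) η := by
    intro η s hs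
    obtain ⟨k, hk⟩ := Nat.exists_eq_add_of_le hs
    clear hs
    induction k generalizing s with
    | zero => simp at hk; rw [hk]
    | succ k ih =>
      have hstep : τ s η ≤ τ (s + 1) η := by
        apply step_inc
        apply notMem_le η (s + 1) (by omega) (by omega)
      exact le_trans hstep (ih (s + 1) (by omega))
  -- base: w (t η + 1) ≤ τ (t η) η   (when t η + 1 ≤ N)
  have base_after : ∀ (η : ℝ), t η + 1 ≤ N → w (t η + 1) ≤ τ (t η) η := by
    intro η hN
    by_cases hne : (S η).Nonempty
    · have hmem := hSmem η _ (Nat.sInf_mem hne)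
      have hts : t η = sInf (S η) - 1 := ht1 η hne
      have h1 : 1 ≤ sInf (S η) := hmem.1
      have heq : sInf (S η) = t η + 1 := by omega
      rw [heq] at hmem
      exact le_of_lt (step_rev (t η) η hmem.2.2)
    · have hts : t η = r η - 1 := ht2 η hne
      have hr1' := hr1 η
      have hteq : t η + 1 = r η := by omega
      -- w (r η) ≤ v η
      have hwv : w (r η) ≤ v η := by
        by_contra hlt
        push_neg at hlt
        have hsub : Finset.Icc 1 (r η) ⊆
            (Finset.Icc 1 N).filter (fun ℓ => v η < w ℓ) := by
          intro ℓ hℓ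
          rw [Finset.mem_Icc] at hℓ
          rw [Finset.mem_filter, Finset.mem_Icc]
          refine ⟨⟨hℓ.1, by omega⟩, ?_⟩
          exact lt_of_lt_of_le hlt (hw ℓ (r η) hℓ.1 hℓ.2 (by omega))
        have hcard := Finset.card_le_card hsub
        rw [Nat.card_Icc] at hcard
        have := hr η
        omega
      have hv0 : τ 0 η = v η := by
        rw [hτ]; simp
      have := mono_before η 0 (Nat.zero_le _)
      rw [hv0] at this
      rw [hteq]
      linarith
  -- decrease after t η
  have after : ∀ (η : ℝ) (s : ℕ), t η ≤ s → s ≤ N →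
      τ s η ≤ τ (t η) η ∧ (t η < s → w s ≤ τ s η) := by
    intro η s hts hsN
    induction s with
    | zero =>
      have : t η = 0 := by omega
      rw [this]
      exact ⟨le_refl _, by omega⟩
    | succ m ih =>
      by_cases hc : t η = m + 1
      · rw [← hc]
        exact ⟨le_refl _, by omega⟩
      · have htm : t η ≤ m := by omega
        have ihm := ih htm (by omega)
        have hwm : w (m + 1) ≤ τ m η := by
          by_cases hmt : t η = m
          · rw [← hmt] at *; exact base_after η (by omega)
          · have h1m : 1 ≤ m := by omega
            have : w (m + 1) ≤ w m := hw m (m + 1) h1m (by omega) hsN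
            exact le_trans this (ihm.2 (by omega))
        refine ⟨le_trans (step_dec m η hwm) ihm.1, fun _ => step_w m η hwm⟩
  -- the main domination lemma: τ (t η) η maximizes τ · η over [0, N]
  have main : ∀ (η : ℝ) (s : ℕ), s ≤ N → τ s η ≤ τ (t η) η := by
    intro η s hsN
    rcases le_or_gt s (t η) with h | h
    · exact mono_before η s h
    · exact (after η s (le_of_lt h) hsN).1
  -- τ s is antitone in η
  have tau_anti : ∀ (s : ℕ) (x y : ℝ), x ≤ y → τ s y ≤ τ s x := by
    intro s x y hxy
    rw [hτ, hτ, hv, hv]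
    apply div_le_div_of_nonneg_right _ (le_of_lt (spos s))
    linarith
  -- τ s is affine in η
  have tau_affine : ∀ (s : ℕ) (a b x y : ℝ), a + b = 1 →
      τ s (a * x + b * y) = a * τ s x + b * τ s y := by
    intro s a b x y hab
    rw [hτ, hτ, hτ, hv, hv, hv]
    have hb : b = 1 - a := by linarith
    subst hb
    have h1 : ((s : ℝ) + 1) ≠ 0 := by positivity
    field_simp
    ring
  have Tnonneg : ∀ η, 0 ≤ T η := by
    intro η; rw [hT]; exact le_max_right _ _
  have Tge : ∀ η, τ (t η) η ≤ T η := by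
    intro η; rw [hT]; exact le_max_left _ _
  constructor
  · -- antitone
    intro x _ y _ hxy
    rw [hT y]
    apply max_le
    · calc τ (t y) y ≤ τ (t y) x := tau_anti _ x y hxy
        _ ≤ τ (t x) x := main x (t y) (htN y)
        _ ≤ T x := Tge x
    · exact Tnonneg x
  · -- convex
    refine ⟨convex_Ici 0, ?_⟩
    intro x _ y _ a b ha hb hab
    simp only [smul_eq_mul]
    rw [hT]
    apply max_le
    · set z := a * x + b * y with hz
      calc τ (t z) z = a * τ (t z) x + b * τ (t z) y := tau_affine _ a b x y hab
        _ ≤ a * T x + b * T y := by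
            apply add_le_add
            · exact mul_le_mul_of_nonneg_left
                (le_trans (main x (t z) (htN z)) (Tge x)) ha
            · exact mul_le_mul_of_nonneg_left
                (le_trans (main y (t z) (htN z)) (Tge y)) hb
    · have := Tnonneg x
      have := Tnonneg y
      positivity
end

section
/- Let n ≥ 2, let 0 ≤ φ_1 ≤ φ_2 ≤ ⋯ ≤ φ_{n−1} be nonnegative real numbers, and fix α with 0 < α ≤ 1. Define G : (α/n, α] → ℝ by G(u) := minimum of ∑_{k=1}^{n−1} φ_k x_k over x ∈ ℝ^{n−1} subject to ∑_{k=1}^{n−1} x_k = α − u and 0 ≤ x_k ≤ u for all k. Then G is monotone nonincreasing on (α/n, α] and convex on (α/n, α]. -/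
/-- **Monotonicity and convexity of the reduced PACKING value function (Lemma 6).**
For nonnegative nondecreasing costs `0 ≤ φ 1 ≤ ⋯ ≤ φ (n-1)` and fixed budget
`0 < α ≤ 1`, the value function `G u` of minimizing `∑_{k=1}^{n-1} φ k * x k`
subject to `∑ x k = α - u`, `0 ≤ x k ≤ u`, is antitone and convex on `(α/n, α]`. -/
theorem packing_LP_reduced_value_antitone_convex
    (n : ℕ) (hn : 2 ≤ n)
    (φ : ℕ → ℝ)
    (hφ0 : ∀ k, 1 ≤ k → k ≤ n - 1 → 0 ≤ φ k)
    (hφ : ∀ k k', 1 ≤ k → k ≤ k' → k' ≤ n - 1 → φ k ≤ φ k')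
    (α : ℝ) (hα0 : 0 < α) (hα1 : α ≤ 1)
    (G : ℝ → ℝ)
    (hG : ∀ u ∈ Set.Ioc (α / n) α,
      IsLeast {y : ℝ | ∃ x : ℕ → ℝ,
        (∑ k ∈ Finset.Icc 1 (n - 1), x k = α - u) ∧
        (∀ k ∈ Finset.Icc 1 (n - 1), 0 ≤ x k ∧ x k ≤ u) ∧
        y = ∑ k ∈ Finset.Icc 1 (n - 1), φ k * x k} (G u)) :
    AntitoneOn G (Set.Ioc (α / n) α) ∧ ConvexOn ℝ (Set.Ioc (α / n) α) G := by
  constructor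
  · -- Antitone
    intro u hu v hv huv
    obtain ⟨x, hsum, hbd, hval⟩ := (hG u hu).1
    rcases eq_or_lt_of_le hu.2 with hEq | hlt
    · -- u = α, hence v = α = u
      have : v = u := le_antisymm (hv.2.trans hEq.symm.le) huv
      rw [this]
    · -- u < α
      have hden : (0:ℝ) < α - u := by linarith
      set t : ℝ := (α - v) / (α - u) with ht
      have ht0 : 0 ≤ t := div_nonneg (by linarith [hv.2]) hden.le
      have ht1 : t ≤ 1 := by
        rw [div_le_one hden]; linarith
      have hmem : (∑ k ∈ Finset.Icc 1 (n - 1), φ k * (t * x k)) ∈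
          {y : ℝ | ∃ x : ℕ → ℝ,
            (∑ k ∈ Finset.Icc 1 (n - 1), x k = α - v) ∧
            (∀ k ∈ Finset.Icc 1 (n - 1), 0 ≤ x k ∧ x k ≤ v) ∧
            y = ∑ k ∈ Finset.Icc 1 (n - 1), φ k * x k} := by
        refine ⟨fun k => t * x k, ?_, ?_, rfl⟩
        · rw [← Finset.mul_sum, hsum, ht]
          field_simp
        · intro k hk
          obtain ⟨hx0, hxu⟩ := hbd k hk
          constructor
          · exact mul_nonneg ht0 hx0
          · calc t * x k ≤ 1 * x k := mul_le_mul_of_nonneg_right ht1 hx0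
              _ = x k := one_mul _
              _ ≤ u := hxu
              _ ≤ v := huv
      have h1 := (hG v hv).2 hmem
      have hterm : ∀ k ∈ Finset.Icc 1 (n - 1), φ k * (t * x k) ≤ φ k * x k := by
        intro k hk
        simp only [Finset.mem_Icc] at hk
        have hφk := hφ0 k hk.1 hk.2
        have hx0 := (hbd k (Finset.mem_Icc.2 hk)).1
        have h2 : t * x k ≤ x k := by
          calc t * x k ≤ 1 * x k := mul_le_mul_of_nonneg_right ht1 hx0
            _ = x k := one_mul _
        exact mul_le_mul_of_nonneg_left h2 hφk
      calc G v ≤ ∑ k ∈ Finset.Icc 1 (n - 1), φ k * (t * x k) := h1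
        _ ≤ ∑ k ∈ Finset.Icc 1 (n - 1), φ k * x k := Finset.sum_le_sum hterm
        _ = G u := hval.symm
  · -- Convex
    refine ⟨convex_Ioc _ _, ?_⟩
    intro u hu v hv a b ha hb hab
    obtain ⟨x, hxsum, hxbd, hxval⟩ := (hG u hu).1
    obtain ⟨y, hysum, hybd, hyval⟩ := (hG v hv).1
    have hw : a • u + b • v ∈ Set.Ioc (α / n) α :=
      (convex_Ioc (α / n) α) hu hv ha hb hab
    have hmem : (a * G u + b * G v) ∈
        {z : ℝ | ∃ x : ℕ → ℝ,
          (∑ k ∈ Finset.Icc 1 (n - 1), x k = α - (a • u + b • v)) ∧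
          (∀ k ∈ Finset.Icc 1 (n - 1), 0 ≤ x k ∧ x k ≤ a • u + b • v) ∧
          z = ∑ k ∈ Finset.Icc 1 (n - 1), φ k * x k} := by
      refine ⟨fun k => a * x k + b * y k, ?_, ?_, ?_⟩
      · rw [Finset.sum_add_distrib, ← Finset.mul_sum, ← Finset.mul_sum, hxsum, hysum]
        simp only [smul_eq_mul]; nlinarith
      · intro k hk
        obtain ⟨hx0, hxu⟩ := hxbd k hk
        obtain ⟨hy0, hyv⟩ := hybd k hk
        simp only [smul_eq_mul]
        constructor
        · positivity
        · have := mul_le_mul_of_nonneg_left hxu ha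
          have := mul_le_mul_of_nonneg_left hyv hb
          linarith
      · rw [hxval, hyval, Finset.mul_sum, Finset.mul_sum, ← Finset.sum_add_distrib]
        apply Finset.sum_congr rfl
        intro k _; ring
    exact (hG _ hw).2 hmem
end

section
/- Let m, n ≥ 1, let D ∈ ℝ^{m×n}, let a ∈ ℝ^m and b ∈ ℝ^n be probability vectors, let C₁ := {X ∈ ℝ^{m×n} : X 1_n = a, X^T 1_m = b}, and let C₂ ⊆ ℝ^{m×n} be a nonempty closed convex set with C₁ ∩ C₂ ≠ ∅. Write f(X) := tr(D^T X), and let ⟨A,B⟩ := tr(A^T B) denote the Frobenius inner product and ‖·‖_F the Frobenius norm. Let ρ > 0 and let sequences X_t, Z_t, M_t ∈ ℝ^{m×n} (t ≥ 0) satisfy, for every t ≥ 0: X_{t+1} ∈ C₁ and f(X_{t+1}) + (ρ/2)‖X_{t+1} − Z_t + M_t‖_F² ≤ f(X) + (ρ/2)‖X − Z_t + M_t‖_F² for all X ∈ C₁; Z_{t+1} ∈ C₂ and ‖X_{t+1} − Z_{t+1} + M_t‖_F ≤ ‖X_{t+1} − Z + M_t‖_F for all Z ∈ C₂; and M_{t+1}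 = M_t + X_{t+1} − Z_{t+1}. Suppose Π* ∈ C₁ ∩ C₂ satisfies f(Π*) ≤ f(X) for all X ∈ C₁ ∩ C₂, set f* := f(Π*), and suppose Y* ∈ ℝ^{m×n} satisfies f* ≤ f(X) + ⟨Y*, X − Z⟩ for all X ∈ C₁ and Z ∈ C₂. Let c₂ > 0 with c₂ ≥ 2‖Y*‖_F and c₁ ≥ ‖Z₀ − Π*‖_F² + (‖M₀‖_F + c₂/ρ)². Then for every t ≥ 0, the averages X̄_t := (1/(t+1)) ∑_{ℓ=1}^{t+1} X_ℓ and Z̄_t := (1/(t+1)) ∑_{ℓ=1}^{t+1} Z_ℓ satisfy f(X̄_t) − f* ≤ ρ c₁ / (2(t+1)) and ‖X̄_t − Z̄_t‖_F ≤ ρ c₁ / (c₂ (t+1)). -/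
set_option maxHeartbeats 1000000

open Matrix

/-- Frobenius norm of a real matrix. -/
noncomputable def frob {m n : ℕ} (A : Matrix (Fin m) (Fin n) ℝ) : ℝ :=
  Real.sqrt (∑ p, ∑ q, (A p q) ^ 2)

namespace ADMMAux

variable {m n : ℕ}

noncomputable def ip (A B : Matrix (Fin m) (Fin n) ℝ) : ℝ := ∑ p, ∑ q, A p q * B p q

lemma ip_comm (A B : Matrix (Fin m) (Fin n) ℝ) : ip A B = ip B A := by
  simp [ip, mul_comm]

lemma ip_add_left (A B C : Matrix (Fin m) (Fin n) ℝ) :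
    ip (A + B) C = ip A C + ip B C := by
  simp [ip, Matrix.add_apply, add_mul, Finset.sum_add_distrib]

lemma ip_add_right (A B C : Matrix (Fin m) (Fin n) ℝ) :
    ip A (B + C) = ip A B + ip A C := by
  simp [ip, Matrix.add_apply, mul_add, Finset.sum_add_distrib]

lemma ip_sub_left (A B C : Matrix (Fin m) (Fin n) ℝ) :
    ip (A - B) C = ip A C - ip B C := by
  simp [ip, Matrix.sub_apply, sub_mul, Finset.sum_sub_distrib]

lemma ip_sub_right (A B C : Matrix (Fin m) (Fin n) ℝ) :
    ip A (B - C) = ip A B - ip A C := by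
  simp [ip, Matrix.sub_apply, mul_sub, Finset.sum_sub_distrib]

lemma ip_smul_left (c : ℝ) (A B : Matrix (Fin m) (Fin n) ℝ) :
    ip (c • A) B = c * ip A B := by
  simp [ip, Matrix.smul_apply, smul_eq_mul, Finset.mul_sum, mul_assoc]

lemma ip_smul_right (c : ℝ) (A B : Matrix (Fin m) (Fin n) ℝ) :
    ip A (c • B) = c * ip A B := by
  rw [ip_comm, ip_smul_left, ip_comm]

lemma ip_zero_left (B : Matrix (Fin m) (Fin n) ℝ) : ip 0 B = 0 := by simp [ip]

lemma ip_self_nonneg (A : Matrix (Fin m) (Fin n) ℝ) : 0 ≤ ip A A :=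
  Finset.sum_nonneg fun _ _ => Finset.sum_nonneg fun _ _ => mul_self_nonneg _

lemma frob_eq (A : Matrix (Fin m) (Fin n) ℝ) : frob A = Real.sqrt (ip A A) := by
  simp [frob, ip, sq]

lemma frob_nonneg (A : Matrix (Fin m) (Fin n) ℝ) : 0 ≤ frob A := Real.sqrt_nonneg _

lemma frob_sq (A : Matrix (Fin m) (Fin n) ℝ) : frob A ^ 2 = ip A A := by
  rw [frob_eq, Real.sq_sqrt (ip_self_nonneg A)]

lemma ip_sum_left {ι : Type*} (s : Finset ι) (F : ι → Matrix (Fin m) (Fin n) ℝ)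
    (B : Matrix (Fin m) (Fin n) ℝ) : ip (∑ i ∈ s, F i) B = ∑ i ∈ s, ip (F i) B := by
  classical
  induction s using Finset.induction_on with
  | empty => simp [ip_zero_left]
  | insert _ _ h ih => rw [Finset.sum_insert h, Finset.sum_insert h, ip_add_left, ih]

lemma ip_sum_right {ι : Type*} (s : Finset ι) (F : ι → Matrix (Fin m) (Fin n) ℝ)
    (B : Matrix (Fin m) (Fin n) ℝ) : ip B (∑ i ∈ s, F i) = ∑ i ∈ s, ip B (F i) := by
  rw [ip_comm, ip_sum_left]
  exact Finset.sum_congr rfl fun i _ => ip_comm _ _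

lemma trace_eq_ip (A B : Matrix (Fin m) (Fin n) ℝ) : Matrix.trace (Aᵀ * B) = ip A B := by
  simp only [Matrix.trace, Matrix.diag, Matrix.mul_apply, Matrix.transpose_apply, ip]
  exact Finset.sum_comm

lemma ip_le_frob_mul_frob (A B : Matrix (Fin m) (Fin n) ℝ) :
    ip A B ≤ frob A * frob B := by
  have h : ip A B = ∑ pq : Fin m × Fin n, A pq.1 pq.2 * B pq.1 pq.2 := by
    rw [ip, ← Finset.sum_product']; rfl
  have h2 : frob A = Real.sqrt (∑ pq : Fin m × Fin n, (A pq.1 pq.2) ^ 2) := by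
    rw [frob, ← Finset.sum_product']; rfl
  have h3 : frob B = Real.sqrt (∑ pq : Fin m × Fin n, (B pq.1 pq.2) ^ 2) := by
    rw [frob, ← Finset.sum_product']; rfl
  rw [h, h2, h3]
  exact Real.sum_mul_le_sqrt_mul_sqrt _ _ _

lemma frob_smul (c : ℝ) (A : Matrix (Fin m) (Fin n) ℝ) : frob (c • A) = |c| * frob A := by
  rw [frob_eq, frob_eq, ip_smul_left, ip_smul_right, ← mul_assoc, ← sq,
    Real.sqrt_mul (sq_nonneg c), Real.sqrt_sq_eq_abs]

lemma frob_neg (A : Matrix (Fin m) (Fin n) ℝ) : frob (-A) = frob A := by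
  have : (-A : Matrix (Fin m) (Fin n) ℝ) = (-1 : ℝ) • A := by ext i j; simp
  rw [this, frob_smul]; norm_num

lemma frob_add_le (A B : Matrix (Fin m) (Fin n) ℝ) :
    frob (A + B) ≤ frob A + frob B := by
  have h1 : ip (A + B) (A + B) ≤ (frob A + frob B) ^ 2 := by
    have cs := ip_le_frob_mul_frob A B
    have e : ip (A + B) (A + B) = ip A A + 2 * ip A B + ip B B := by
      rw [ip_add_left, ip_add_right, ip_add_right, ip_comm B A]; ring
    rw [e, ← frob_sq A, ← frob_sq B]
    nlinarith [frob_nonneg A, frob_nonneg B]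
  calc frob (A + B) = Real.sqrt (ip (A + B) (A + B)) := frob_eq _
    _ ≤ Real.sqrt ((frob A + frob B) ^ 2) := Real.sqrt_le_sqrt h1
    _ = frob A + frob B :=
        Real.sqrt_sq (by have := frob_nonneg A; have := frob_nonneg B; linarith)

lemma frob_sub_le (A B : Matrix (Fin m) (Fin n) ℝ) :
    frob (A - B) ≤ frob A + frob B := by
  rw [sub_eq_add_neg]
  exact (frob_add_le A (-B)).trans (by rw [frob_neg])

lemma step_identity (ρ : ℝ) (d y p z0 z1 m0 m1 : Matrix (Fin m) (Fin n) ℝ) :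
    (ρ^2 * ip (z0 - p) (z0 - p) + ip (ρ•m0 - y) (ρ•m0 - y))
      - (ρ^2 * ip (z1 - p) (z1 - p) + ip (ρ•m1 - y) (ρ•m1 - y))
      - (2*ρ*(ip d (m1 - m0 + z1) - ip d p) + 2*ρ*(ip y ((m1 - m0 + z1) - z1)))
    = 2*ρ*(ip d (p - (m1 - m0 + z1)) + ρ * ip ((m1 - m0 + z1) - z0 + m0) (p - (m1 - m0 + z1)))
      - 2*ρ^2 * ip m1 (p - z1)
      + ρ^2 * ip (z1 - z0 + (m1 - m0)) (z1 - z0 + (m1 - m0)) := by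
  simp only [ip_sub_left, ip_sub_right, ip_add_left, ip_add_right, ip_smul_left, ip_smul_right,
    ip_comm]
  ring

lemma quad_vi (ρ c K : ℝ) (hρ : 0 < ρ) (hK : 0 ≤ K)
    (h : ∀ s : ℝ, 0 ≤ s * c + ρ/2 * s^2 * K) : 0 ≤ c := by
  by_contra hc
  push_neg at hc
  have hd : 0 < ρ * K + 1 := by nlinarith
  set r : ℝ := (ρ * K + 1)⁻¹ with hr
  have hrpos : 0 < r := inv_pos.mpr hd
  have hr1 : ρ * K * r < 1 := by
    rw [hr, ← div_eq_mul_inv]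
    exact (div_lt_one hd).mpr (by linarith)
  have h5 := h (-c * r)
  have hc2 : 0 < c ^ 2 * r := mul_pos (by nlinarith) hrpos
  nlinarith [h5, hr1, hc2, hρ, hK, hrpos]

lemma proj_vi (c K : ℝ) (hK : 0 ≤ K)
    (h : ∀ s : ℝ, 0 < s → s ≤ 1 → 2 * s * c ≤ s ^ 2 * K) : c ≤ 0 := by
  by_contra hc
  push_neg at hc
  have hK1 : 0 < K + 1 := by linarith
  set s : ℝ := min 1 (c / (K + 1)) with hs
  have hs0 : 0 < s := lt_min one_pos (div_pos hc hK1)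
  have hs1 : s ≤ 1 := min_le_left _ _
  have hs2 : s ≤ c / (K + 1) := min_le_right _ _
  have h6 := h s hs0 hs1
  have hsK : s * K ≤ c := by
    calc s * K ≤ (c / (K + 1)) * K := mul_le_mul_of_nonneg_right hs2 hK
      _ ≤ c := by rw [div_mul_eq_mul_div, div_le_iff₀ hK1]; nlinarith
  nlinarith [h6, hsK, hs0, mul_pos hs0 hc]

end ADMMAux

open ADMMAux

/-- **Non-asymptotic convergence of ADMM for order-constrained OT (Theorem 1).** -/
theorem ADMM_convergence_order_constrained_OT
    (m n : ℕ) (hm : 1 ≤ m) (hn : 1 ≤ n)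
    (D : Matrix (Fin m) (Fin n) ℝ)
    (a : Fin m → ℝ) (b : Fin n → ℝ)
    (ha0 : ∀ i, 0 ≤ a i) (hb0 : ∀ j, 0 ≤ b j)
    (ha1 : ∑ i, a i = 1) (hb1 : ∑ j, b j = 1)
    (C₁ : Set (Matrix (Fin m) (Fin n) ℝ))
    (hC₁ : C₁ = {X | (∀ p, ∑ q, X p q = a p) ∧ (∀ q, ∑ p, X p q = b q)})
    (C₂ : Set (Matrix (Fin m) (Fin n) ℝ))
    (hC₂ne : C₂.Nonempty) (hC₂closed : IsClosed C₂) (hC₂convex : Convex ℝ C₂)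
    (hC₁C₂ : (C₁ ∩ C₂).Nonempty)
    (f : Matrix (Fin m) (Fin n) ℝ → ℝ)
    (hf : ∀ X, f X = Matrix.trace (Dᵀ * X))
    (ρ : ℝ) (hρ : 0 < ρ)
    (X Z M : ℕ → Matrix (Fin m) (Fin n) ℝ)
    (hX : ∀ t : ℕ, X (t + 1) ∈ C₁ ∧
      ∀ X' ∈ C₁, f (X (t + 1)) + ρ / 2 * frob (X (t + 1) - Z t + M t) ^ 2 ≤
        f X' + ρ / 2 * frob (X' - Z t + M t) ^ 2)
    (hZ : ∀ t : ℕ, Z (t + 1) ∈ C₂ ∧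
      ∀ Z' ∈ C₂, frob (X (t + 1) - Z (t + 1) + M t) ≤ frob (X (t + 1) - Z' + M t))
    (hM : ∀ t : ℕ, M (t + 1) = M t + X (t + 1) - Z (t + 1))
    (Pstar : Matrix (Fin m) (Fin n) ℝ)
    (hPstar : Pstar ∈ C₁ ∩ C₂)
    (hPopt : ∀ X' ∈ C₁ ∩ C₂, f Pstar ≤ f X')
    (fstar : ℝ) (hfstar : fstar = f Pstar)
    (Ystar : Matrix (Fin m) (Fin n) ℝ)
    (hYstar : ∀ X' ∈ C₁, ∀ Z' ∈ C₂,
      fstar ≤ f X' + Matrix.trace (Ystarᵀ * (X' - Z')))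
    (c₁ c₂ : ℝ) (hc₂pos : 0 < c₂)
    (hc₂ : 2 * frob Ystar ≤ c₂)
    (hc₁ : frob (Z 0 - Pstar) ^ 2 + (frob (M 0) + c₂ / ρ) ^ 2 ≤ c₁)
    (Xbar Zbar : ℕ → Matrix (Fin m) (Fin n) ℝ)
    (hXbar : ∀ t : ℕ, Xbar t = (((t : ℝ) + 1)⁻¹) • ∑ ℓ ∈ Finset.Icc 1 (t + 1), X ℓ)
    (hZbar : ∀ t : ℕ, Zbar t = (((t : ℝ) + 1)⁻¹) • ∑ ℓ ∈ Finset.Icc 1 (t + 1), Z ℓ) :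
    ∀ t : ℕ,
      f (Xbar t) - fstar ≤ ρ * c₁ / (2 * ((t : ℝ) + 1)) ∧
      frob (Xbar t - Zbar t) ≤ ρ * c₁ / (c₂ * ((t : ℝ) + 1)) := by
  have hfi : ∀ W, f W = ip D W := fun W => by rw [hf, trace_eq_ip]
  -- Variational inequality for the X-update
  have hA : ∀ t : ℕ, ∀ X', X' ∈ C₁ →
      0 ≤ ip D (X' - X (t+1)) + ρ * ip (X (t+1) - Z t + M t) (X' - X (t+1)) := by
    intro t X' hX'
    set Δ := X' - X (t+1) with hΔ
    set W := X (t+1) - Z t + M t with hW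
    obtain ⟨h1, h2⟩ : (∀ p, ∑ q, X (t+1) p q = a p) ∧ (∀ q, ∑ p, X (t+1) p q = b q) := by
      have := (hX t).1; rwa [hC₁] at this
    obtain ⟨g1, g2⟩ : (∀ p, ∑ q, X' p q = a p) ∧ (∀ q, ∑ p, X' p q = b q) := by
      rwa [hC₁] at hX'
    have hΔrow : ∀ p, ∑ q, Δ p q = 0 := by
      intro p; rw [hΔ]; simp [Matrix.sub_apply, Finset.sum_sub_distrib, g1 p, h1 p]
    have hΔcol : ∀ q, ∑ p, Δ p q = 0 := by
      intro q; rw [hΔ]; simp [Matrix.sub_apply, Finset.sum_sub_distrib, g2 q, h2 q]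
    have hmem : ∀ s : ℝ, X (t+1) + s • Δ ∈ C₁ := by
      intro s
      rw [hC₁]
      refine ⟨fun p => ?_, fun q => ?_⟩
      · simp [Matrix.add_apply, Matrix.smul_apply, Finset.sum_add_distrib, ← Finset.mul_sum,
          hΔrow p, h1 p]
      · simp [Matrix.add_apply, Matrix.smul_apply, Finset.sum_add_distrib, ← Finset.mul_sum,
          hΔcol q, h2 q]
    have key : ∀ s : ℝ, 0 ≤ s * (ip D Δ + ρ * ip W Δ) + ρ/2 * s^2 * ip Δ Δ := by
      intro s
      have h := (hX t).2 (X (t+1) + s • Δ) (hmem s)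
      rw [hfi, hfi] at h
      have e1 : X (t+1) + s • Δ - Z t + M t = W + s • Δ := by
        rw [hW]; ext i j
        simp only [Matrix.add_apply, Matrix.sub_apply, Matrix.smul_apply, smul_eq_mul]
        ring
      rw [e1, ← hW, frob_sq, frob_sq] at h
      simp only [ip_add_left, ip_add_right, ip_smul_left, ip_smul_right, ip_comm] at h ⊢
      nlinarith [h]
    have := quad_vi ρ (ip D Δ + ρ * ip W Δ) (ip Δ Δ) hρ (ip_self_nonneg Δ) key
    linarith [this]
  -- Variational inequality for the Z-update
  have hB : ∀ t : ℕ, ∀ Z', Z' ∈ C₂ → ip (M (t+1)) (Z' - Z (t+1)) ≤ 0 := by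
    intro t Z' hZ'
    set Δ := Z' - Z (t+1) with hΔ
    have hmem : ∀ s : ℝ, 0 ≤ s → s ≤ 1 → Z (t+1) + s • Δ ∈ C₂ := by
      intro s hs0 hs1
      have h := hC₂convex (hZ t).1 hZ' (by linarith : (0:ℝ) ≤ 1 - s) hs0 (by ring)
      have e : (1 - s) • Z (t+1) + s • Z' = Z (t+1) + s • Δ := by
        rw [hΔ]; ext i j
        simp only [Matrix.add_apply, Matrix.sub_apply, Matrix.smul_apply, smul_eq_mul]
        ring
      rwa [e] at h
    have hW : X (t+1) - Z (t+1) + M t = M (t+1) := by rw [hM t]; abel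
    have key : ∀ s : ℝ, 0 < s → s ≤ 1 →
        2 * s * ip (M (t+1)) Δ ≤ s^2 * ip Δ Δ := by
      intro s hs0 hs1
      have h := (hZ t).2 (Z (t+1) + s • Δ) (hmem s hs0.le hs1)
      have e1 : X (t+1) - (Z (t+1) + s • Δ) + M t = M (t+1) - s • Δ := by
        rw [hM t]; ext i j
        simp only [Matrix.add_apply, Matrix.sub_apply, Matrix.smul_apply, smul_eq_mul]
        ring
      rw [hW, e1] at h
      have h2 : frob (M (t+1)) ^ 2 ≤ frob (M (t+1) - s • Δ) ^ 2 :=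
        pow_le_pow_left₀ (frob_nonneg _) h 2
      rw [frob_sq, frob_sq] at h2
      simp only [ip_sub_left, ip_sub_right, ip_smul_left, ip_smul_right, ip_comm] at h2
      nlinarith [h2]
    exact proj_vi _ _ (ip_self_nonneg Δ) key
  -- Per-step inequality
  have key : ∀ t : ℕ, ∀ Y : Matrix (Fin m) (Fin n) ℝ,
      2*ρ*(ip D (X (t+1)) - ip D Pstar) + 2*ρ*(ip Y (X (t+1) - Z (t+1)))
        ≤ (ρ^2 * ip (Z t - Pstar) (Z t - Pstar) + ip (ρ•M t - Y) (ρ•M t - Y))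
          - (ρ^2 * ip (Z (t+1) - Pstar) (Z (t+1) - Pstar)
              + ip (ρ•M (t+1) - Y) (ρ•M (t+1) - Y)) := by
    intro t Y
    have hX1 : X (t+1) = M (t+1) - M t + Z (t+1) := by rw [hM t]; abel
    have hA' := hA t Pstar hPstar.1
    have hB' := hB t Pstar hPstar.2
    have hS := ip_self_nonneg (Z (t+1) - Z t + (M (t+1) - M t))
    have idt := step_identity ρ D Y Pstar (Z t) (Z (t+1)) (M t) (M (t+1))
    rw [hX1] at hA' ⊢
    have h1 : 0 ≤ 2*ρ*(ip D (Pstar - (M (t+1) - M t + Z (t+1)))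
        + ρ * ip ((M (t+1) - M t + Z (t+1)) - Z t + M t)
            (Pstar - (M (t+1) - M t + Z (t+1)))) := by
      have e : ip D (Pstar - (M (t+1) - M t + Z (t+1)))
          = - ip D ((M (t+1) - M t + Z (t+1)) - Pstar) := by
        rw [ip_sub_right, ip_sub_right]; ring
      have e2 : ip ((M (t+1) - M t + Z (t+1)) - Z t + M t)
            (Pstar - (M (t+1) - M t + Z (t+1)))
          = - ip ((M (t+1) - M t + Z (t+1)) - Z t + M t)
              ((M (t+1) - M t + Z (t+1)) - Pstar) := by
        rw [ip_sub_right, ip_sub_right]; ring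
      nlinarith [hA', hρ]
    have h2 : 0 ≤ -(2*ρ^2) * ip (M (t+1)) (Pstar - Z (t+1)) := by
      nlinarith [hB', sq_nonneg ρ]
    have h3 : 0 ≤ ρ^2 * ip (Z (t+1) - Z t + (M (t+1) - M t)) (Z (t+1) - Z t + (M (t+1) - M t)) :=
      mul_nonneg (sq_nonneg ρ) hS
    linarith [idt, h1, h2, h3]
  -- Telescoped inequality
  have sumkey : ∀ t : ℕ, ∀ Y : Matrix (Fin m) (Fin n) ℝ,
      ∑ ℓ ∈ Finset.Icc 1 (t+1),
          (2*ρ*(ip D (X ℓ) - ip D Pstar) + 2*ρ*(ip Y (X ℓ - Z ℓ)))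
        ≤ ρ^2 * ip (Z 0 - Pstar) (Z 0 - Pstar) + ip (ρ•M 0 - Y) (ρ•M 0 - Y) := by
    intro t Y
    set V : ℕ → ℝ := fun s =>
      ρ^2 * ip (Z s - Pstar) (Z s - Pstar) + ip (ρ•M s - Y) (ρ•M s - Y) with hV
    have hVnn : ∀ s, 0 ≤ V s := fun s =>
      add_nonneg (mul_nonneg (sq_nonneg ρ) (ip_self_nonneg _)) (ip_self_nonneg _)
    have main : ∀ u : ℕ, ∑ ℓ ∈ Finset.Icc 1 (u+1),
        (2*ρ*(ip D (X ℓ) - ip D Pstar) + 2*ρ*(ip Y (X ℓ - Z ℓ))) ≤ V 0 - V (u+1) := by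
      intro u
      induction u with
      | zero =>
        rw [show Finset.Icc 1 1 = {1} from rfl, Finset.sum_singleton]
        exact key 0 Y
      | succ k ih =>
        rw [Finset.sum_Icc_succ_top (by omega : 1 ≤ k+1+1)]
        have := key (k+1) Y
        have e : (V (k+1) - V (k+1+1)) =
            (ρ^2 * ip (Z (k+1) - Pstar) (Z (k+1) - Pstar)
              + ip (ρ•M (k+1) - Y) (ρ•M (k+1) - Y))
            - (ρ^2 * ip (Z (k+1+1) - Pstar) (Z (k+1+1) - Pstar)
              + ip (ρ•M (k+1+1) - Y) (ρ•M (k+1+1) - Y)) := rfl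
        linarith [this, ih]
    have := main t
    have h0 := hVnn (t+1)
    have e0 : V 0 = ρ^2 * ip (Z 0 - Pstar) (Z 0 - Pstar) + ip (ρ•M 0 - Y) (ρ•M 0 - Y) := rfl
    linarith
  intro t
  set T : ℝ := (t : ℝ) + 1 with hT
  have hTpos : 0 < T := by rw [hT]; positivity
  have hTne : T ≠ 0 := ne_of_gt hTpos
  have hcard : ((Finset.Icc 1 (t+1)).card : ℝ) = T := by
    rw [Nat.card_Icc, hT]
    push_cast [Nat.add_sub_cancel]
    ring
  -- memberships of the averages
  have hXbarC₁ : Xbar t ∈ C₁ := by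
    rw [hXbar t, hC₁]
    have hrow : ∀ ℓ ∈ Finset.Icc 1 (t+1), ∀ p, ∑ q, X ℓ p q = a p := by
      intro ℓ hℓ
      rw [Finset.mem_Icc] at hℓ
      obtain ⟨k, rfl⟩ : ∃ k, ℓ = k + 1 := ⟨ℓ - 1, by omega⟩
      have := (hX k).1; rw [hC₁] at this; exact this.1
    have hcol : ∀ ℓ ∈ Finset.Icc 1 (t+1), ∀ q, ∑ p, X ℓ p q = b q := by
      intro ℓ hℓ
      rw [Finset.mem_Icc] at hℓ
      obtain ⟨k, rfl⟩ : ∃ k, ℓ = k + 1 := ⟨ℓ - 1, by omega⟩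
      have := (hX k).1; rw [hC₁] at this; exact this.2
    constructor
    · intro p
      simp only [Matrix.smul_apply, Matrix.sum_apply, smul_eq_mul]
      rw [← Finset.mul_sum, Finset.sum_comm]
      rw [Finset.sum_congr rfl (fun ℓ hℓ => hrow ℓ hℓ p), Finset.sum_const, nsmul_eq_mul, hcard]
      field_simp
      rw [hT]
    · intro q
      simp only [Matrix.smul_apply, Matrix.sum_apply, smul_eq_mul]
      rw [← Finset.mul_sum, Finset.sum_comm]
      rw [Finset.sum_congr rfl (fun ℓ hℓ => hcol ℓ hℓ q), Finset.sum_const, nsmul_eq_mul, hcard]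
      field_simp
      rw [hT]
  have hZbarC₂ : Zbar t ∈ C₂ := by
    rw [hZbar t, Finset.smul_sum]
    refine hC₂convex.sum_mem (fun i _ => by positivity) ?_ ?_
    · rw [Finset.sum_const, nsmul_eq_mul, hcard]
      field_simp
      rw [hT]
    · intro ℓ hℓ
      rw [Finset.mem_Icc] at hℓ
      obtain ⟨k, rfl⟩ : ∃ k, ℓ = k + 1 := ⟨ℓ - 1, by omega⟩
      exact (hZ k).1
  -- averaged inequality
  have hsumX : ip D (Xbar t) = T⁻¹ * ∑ ℓ ∈ Finset.Icc 1 (t+1), ip D (X ℓ) := by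
    rw [hXbar t, ip_smul_right, ip_sum_right]
  have hG : Xbar t - Zbar t = T⁻¹ • ∑ ℓ ∈ Finset.Icc 1 (t+1), (X ℓ - Z ℓ) := by
    rw [hXbar t, hZbar t, ← smul_sub, Finset.sum_sub_distrib]
  have hsumG : ∀ Y : Matrix (Fin m) (Fin n) ℝ,
      ip Y (Xbar t - Zbar t) = T⁻¹ * ∑ ℓ ∈ Finset.Icc 1 (t+1), ip Y (X ℓ - Z ℓ) := by
    intro Y
    rw [hG, ip_smul_right, ip_sum_right]
  have avg : ∀ Y : Matrix (Fin m) (Fin n) ℝ,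
      2*ρ*T*((ip D (Xbar t) - ip D Pstar) + ip Y (Xbar t - Zbar t))
        ≤ ρ^2 * ip (Z 0 - Pstar) (Z 0 - Pstar) + ip (ρ•M 0 - Y) (ρ•M 0 - Y) := by
    intro Y
    have h := sumkey t Y
    have e : ∑ ℓ ∈ Finset.Icc 1 (t+1),
        (2*ρ*(ip D (X ℓ) - ip D Pstar) + 2*ρ*(ip Y (X ℓ - Z ℓ)))
        = 2*ρ*T*((ip D (Xbar t) - ip D Pstar) + ip Y (Xbar t - Zbar t)) := by
      rw [hsumX, hsumG Y, Finset.sum_add_distrib, ← Finset.mul_sum, ← Finset.mul_sum,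
        Finset.sum_sub_distrib, Finset.sum_const, nsmul_eq_mul, hcard]
      field_simp
    linarith [h, e.ge, e.le]
  -- bound on the constant
  have hC0 : ∀ Y : Matrix (Fin m) (Fin n) ℝ, frob Y ≤ c₂ →
      ρ^2 * ip (Z 0 - Pstar) (Z 0 - Pstar) + ip (ρ•M 0 - Y) (ρ•M 0 - Y) ≤ ρ^2 * c₁ := by
    intro Y hY
    have e1 : ip (Z 0 - Pstar) (Z 0 - Pstar) = frob (Z 0 - Pstar)^2 := (frob_sq _).symm
    have e2 : ip (ρ•M 0 - Y) (ρ•M 0 - Y) = frob (ρ•M 0 - Y)^2 := (frob_sq _).symm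
    have h3 : frob (ρ•M 0 - Y) ≤ ρ * frob (M 0) + c₂ := by
      calc frob (ρ•M 0 - Y) ≤ frob (ρ•M 0) + frob Y := frob_sub_le _ _
        _ = ρ * frob (M 0) + frob Y := by rw [frob_smul, abs_of_pos hρ]
        _ ≤ ρ * frob (M 0) + c₂ := by linarith
    have h4 : frob (ρ•M 0 - Y)^2 ≤ (ρ * frob (M 0) + c₂)^2 :=
      pow_le_pow_left₀ (frob_nonneg _) h3 2
    have h5 : (ρ * frob (M 0) + c₂)^2 = ρ^2 * (frob (M 0) + c₂/ρ)^2 := by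
      field_simp
    have h6 : frob (ρ•M 0 - Y)^2 ≤ ρ^2 * (frob (M 0) + c₂/ρ)^2 := h4.trans_eq h5
    have h7 : ρ^2 * (frob (Z 0 - Pstar)^2 + (frob (M 0) + c₂/ρ)^2) ≤ ρ^2 * c₁ :=
      mul_le_mul_of_nonneg_left hc₁ (sq_nonneg ρ)
    rw [e1, e2]
    nlinarith [h6, h7]
  -- first claim
  have hfXb : f (Xbar t) = ip D (Xbar t) := hfi _
  have hfP : fstar = ip D Pstar := by rw [hfstar, hfi]
  have claim1 : f (Xbar t) - fstar ≤ ρ * c₁ / (2 * T) := by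
    have h := avg 0
    have hz : ip (0 : Matrix (Fin m) (Fin n) ℝ) (Xbar t - Zbar t) = 0 := ip_zero_left _
    have hf0 : frob (0 : Matrix (Fin m) (Fin n) ℝ) = 0 := by simp [frob]
    have hb := hC0 0 (by rw [hf0]; exact hc₂pos.le)
    rw [hz] at h
    rw [hfXb, hfP, le_div_iff₀ (by positivity : (0:ℝ) < 2 * T)]
    refine (mul_le_mul_iff_right₀ hρ).mp ?_
    nlinarith [h, hb]
  have hc₁0 : 0 ≤ c₁ := le_trans (by positivity) hc₁
  have claim2 : frob (Xbar t - Zbar t) ≤ ρ * c₁ / (c₂ * T) := by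
    rcases eq_or_lt_of_le (frob_nonneg (Xbar t - Zbar t)) with h0 | hpos
    · rw [← h0]
      exact div_nonneg (mul_nonneg hρ.le hc₁0) (by positivity)
    · set G := Xbar t - Zbar t with hGdef
      set Y : Matrix (Fin m) (Fin n) ℝ := (c₂ / frob G) • G with hYdef
      have hgne : frob G ≠ 0 := ne_of_gt hpos
      have hfY : frob Y = c₂ := by
        rw [hYdef, frob_smul, abs_of_pos (div_pos hc₂pos hpos)]
        field_simp
      have hipYG : ip Y G = c₂ * frob G := by
        rw [hYdef, ip_smul_left, ← frob_sq]
        field_simp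
      have h := avg Y
      have hb := hC0 Y (le_of_eq hfY)
      have hfg : fstar - f (Xbar t) ≤ (c₂/2) * frob G := by
        have hY := hYstar (Xbar t) hXbarC₁ (Zbar t) hZbarC₂
        rw [trace_eq_ip] at hY
        have hcs := ip_le_frob_mul_frob Ystar G
        nlinarith [frob_nonneg G, frob_nonneg Ystar, hc₂, hY, hcs]
      rw [hfXb, hfP] at hfg
      rw [hipYG] at h
      rw [le_div_iff₀ (by positivity : (0:ℝ) < c₂ * T)]
      refine (mul_le_mul_iff_right₀ hρ).mp ?_
      nlinarith [h, hb, hfg, hTpos, hρ, mul_pos hρ hTpos]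
  exact ⟨claim1, claim2⟩
end
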